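/- arXiv:1310.5860 — 5 statements merged into one kernel-verified Lean document; each statement's English description precedes it below -/
import Mathlib

section
/- In the group S_∞ of finitary permutations of ℕ, two partial permutations (λ', h') and (λ'', h'') with λ', λ'' ⊆ λ (λ a finite subset of ℕ, h' a permutation supported in λ', h'' supported in λ'') that are conjugate under S_∞ (meaning there is g ∈ S_∞ with gλ' = λ'' and g h' g⁻¹ = h'') are already conjugate under the subgroup S_λ of permutations supported in λ. -/
/-- In the group `S_∞` of finitary permutations of `ℕ`, two partial
permutations `(λ', h')` and `(λ'', h'')` with `λ', λ'' ⊆ λ` (each `h` supported in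
its index set) that are conjugate under a finitary permutation `g` of `ℕ`
(`g λ' = λ''` and `g h' g⁻¹ = h''`) are already conjugate under the subgroup `S_λ`
of permutations supported in `λ`. -/
theorem stmt2 (lam lam' lam'' : Finset ℕ) (h' h'' : Equiv.Perm ℕ)
    (hsub' : lam' ⊆ lam) (hsub'' : lam'' ⊆ lam)
    (hsupp' : ∀ i ∉ lam', h' i = i) (hsupp'' : ∀ i ∉ lam'', h'' i = i)
    (g : Equiv.Perm ℕ) (hgfin : {i | g i ≠ i}.Finite)
    (hgl : lam'.image g = lam'') (hgc : g * h' * g⁻¹ = h'') :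
    ∃ k : Equiv.Perm ℕ, (∀ i ∉ lam, k i = i) ∧
      lam'.image k = lam'' ∧ k * h' * k⁻¹ = h'' := by
  classical
  have hinj : Function.Injective g := g.injective
  have hcard : (lam \ lam').card = (lam \ lam'').card := by
    rw [Finset.card_sdiff_of_subset hsub', Finset.card_sdiff_of_subset hsub'', ← hgl,
      Finset.card_image_of_injective _ hinj]
  let e2 : ↥(lam \ lam') ≃ ↥(lam \ lam'') := Finset.equivOfCardEq hcard
  have hmem'' : ∀ x ∈ lam', g x ∈ lam'' := fun x hx =>
    hgl ▸ Finset.mem_image_of_mem g hx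
  have hmem' : ∀ y ∈ lam'', g.symm y ∈ lam' := by
    intro y hy
    rw [← hgl] at hy
    obtain ⟨a, ha, rfl⟩ := Finset.mem_image.mp hy
    simpa using ha
  let f : ℕ → ℕ := fun x =>
    if hx : x ∈ lam' then g x
    else if hx2 : x ∈ lam \ lam' then (e2 ⟨x, hx2⟩ : ℕ)
    else x
  let fi : ℕ → ℕ := fun y =>
    if hy : y ∈ lam'' then g.symm y
    else if hy2 : y ∈ lam \ lam'' then (e2.symm ⟨y, hy2⟩ : ℕ)
    else y
  have hLI : Function.LeftInverse fi f := by
    intro x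
    by_cases hx : x ∈ lam'
    · simp only [f, fi, dif_pos hx, dif_pos (hmem'' x hx)]
      simp
    · by_cases hx2 : x ∈ lam \ lam'
      · simp only [f, fi, dif_neg hx, dif_pos hx2]
        have h1 : (e2 ⟨x, hx2⟩ : ℕ) ∈ lam \ lam'' := (e2 ⟨x, hx2⟩).2
        have h2 : (e2 ⟨x, hx2⟩ : ℕ) ∉ lam'' := (Finset.mem_sdiff.mp h1).2
        rw [dif_neg h2, dif_pos h1]
        rw [show (⟨((e2 ⟨x, hx2⟩ : ↥(lam \ lam'')) : ℕ), h1⟩ : ↥(lam \ lam'')) =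
          e2 ⟨x, hx2⟩ from rfl, Equiv.symm_apply_apply]
      · have hnl : x ∉ lam := by
          intro hxl
          exact hx2 (Finset.mem_sdiff.mpr ⟨hxl, hx⟩)
        have hn'' : x ∉ lam'' := fun h => hnl (hsub'' h)
        have hn2 : x ∉ lam \ lam'' := fun h => hnl (Finset.mem_sdiff.mp h).1
        simp only [f, fi, dif_neg hx, dif_neg hx2, dif_neg hn'', dif_neg hn2]
  have hRI : Function.RightInverse fi f := by
    intro y
    by_cases hy : y ∈ lam''
    · simp only [fi, f, dif_pos hy, dif_pos (hmem' y hy)]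
      simp
    · by_cases hy2 : y ∈ lam \ lam''
      · simp only [fi, f, dif_neg hy, dif_pos hy2]
        have h1 : (e2.symm ⟨y, hy2⟩ : ℕ) ∈ lam \ lam' := (e2.symm ⟨y, hy2⟩).2
        have h2 : (e2.symm ⟨y, hy2⟩ : ℕ) ∉ lam' := (Finset.mem_sdiff.mp h1).2
        rw [dif_neg h2, dif_pos h1]
        rw [show (⟨((e2.symm ⟨y, hy2⟩ : ↥(lam \ lam')) : ℕ), h1⟩ : ↥(lam \ lam')) =
          e2.symm ⟨y, hy2⟩ from rfl, Equiv.apply_symm_apply]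
      · have hnl : y ∉ lam := by
          intro hyl
          exact hy2 (Finset.mem_sdiff.mpr ⟨hyl, hy⟩)
        have hn' : y ∉ lam' := fun h => hnl (hsub' h)
        have hn2 : y ∉ lam \ lam' := fun h => hnl (Finset.mem_sdiff.mp h).1
        simp only [fi, f, dif_neg hy, dif_neg hy2, dif_neg hn', dif_neg hn2]
  let k : Equiv.Perm ℕ := ⟨f, fi, hLI, hRI⟩
  have hk : ∀ x, k x = f x := fun _ => rfl
  have hki : ∀ x, k⁻¹ x = fi x := fun _ => rfl
  have hkl : ∀ x ∈ lam', k x = g x := by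
    intro x hx
    simp only [hk, f, dif_pos hx]
  refine ⟨k, ?_, ?_, ?_⟩
  · intro i hi
    have h1 : i ∉ lam' := fun h => hi (hsub' h)
    have h2 : i ∉ lam \ lam' := fun h => hi (Finset.mem_sdiff.mp h).1
    simp only [hk, f, dif_neg h1, dif_neg h2]
  · rw [Finset.image_congr (fun x hx => hkl x hx), hgl]
  · ext i
    simp only [Equiv.Perm.mul_apply]
    by_cases hi : i ∈ lam''
    · have hgi : g.symm i ∈ lam' := hmem' i hi
      have hki' : k⁻¹ i = g.symm i := by simp only [hki, fi, dif_pos hi]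
      have hh : h' (g.symm i) ∈ lam' := by
        by_contra hcon
        have h2 := h'.injective (hsupp' _ hcon)
        rw [h2] at hcon
        exact hcon hgi
      rw [hki', hkl _ hh, ← hgc]
      simp [Equiv.Perm.mul_apply, Equiv.Perm.inv_def]
    · have hki'' : k⁻¹ i ∉ lam' := by
        intro hcon
        have : k (k⁻¹ i) = g (k⁻¹ i) := hkl _ hcon
        rw [show k (k⁻¹ i) = i from k.apply_symm_apply i] at this
        exact hi (this ▸ hmem'' _ hcon)
      rw [hsupp' _ hki'', show k (k⁻¹ i) = i from k.apply_symm_apply i, hsupp'' _ hi]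
end

section
/- The restricted wreath product G = F ≀ S_∞ (with F finite) acting on partial elements satisfies the admissibility condition: if two partial elements (λ', h') and (λ'', h'') with λ', λ'' ⊆ λ are conjugate in G, then they are conjugate in the subgroup G_λ of elements supported in λ. -/
/-- Elements of the restricted wreath product `F ≀ S_∞`: a permutation of `ℕ`
together with a labelling `ℕ → F` (finitariness is imposed by hypotheses below). -/
abbrev WreathElt (F : Type*) [Group F] := Equiv.Perm ℕ × (ℕ → F)

/-- Multiplication of `F ≀ S_∞`: `(s'; f')·(s''; f'') = (s's''; i ↦ f'_{s''(i)} · f''_i)`. -/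
def wmul {F : Type*} [Group F] (a b : WreathElt F) : WreathElt F :=
  (a.1 * b.1, fun i => a.2 (b.1 i) * b.2 i)

/-- Inversion in `F ≀ S_∞`. -/
def winv {F : Type*} [Group F] (a : WreathElt F) : WreathElt F :=
  (a.1⁻¹, fun i => (a.2 (a.1⁻¹ i))⁻¹)

/-- The restricted wreath product `G = F ≀ S_∞` (with `F` finite)
acting on partial elements satisfies the admissibility condition: if two partial
elements `(λ', h')` and `(λ'', h'')` with `λ', λ'' ⊆ λ` are conjugate in `G`
(by an element `g` of finite support), then they are conjugate by an element of
the subgroup `G_λ` of elements supported in `λ`. -/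
theorem stmt5 {F : Type*} [Group F] [Fintype F]
    (lam lam' lam'' : Finset ℕ) (hsub' : lam' ⊆ lam) (hsub'' : lam'' ⊆ lam)
    (h' h'' g : WreathElt F)
    (hh' : ∀ n : ℕ, (h'.1 n ≠ n ∨ h'.2 n ≠ 1) → n ∈ lam')
    (hh'' : ∀ n : ℕ, (h''.1 n ≠ n ∨ h''.2 n ≠ 1) → n ∈ lam'')
    (hg : {n : ℕ | g.1 n ≠ n ∨ g.2 n ≠ 1}.Finite)
    (hgl : lam'.image g.1 = lam'')
    (hconj : wmul (wmul g h') (winv g) = h'') :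
    ∃ k : WreathElt F, (∀ n : ℕ, (k.1 n ≠ n ∨ k.2 n ≠ 1) → n ∈ lam) ∧
      lam'.image k.1 = lam'' ∧ wmul (wmul k h') (winv k) = h'' := by
  classical
  have ginj : Function.Injective g.1 := g.1.injective
  have hmem'' : ∀ n ∈ lam', g.1 n ∈ lam'' := fun n hn => hgl ▸ Finset.mem_image_of_mem _ hn
  have hcard : lam''.card = lam'.card := by
    rw [← hgl, Finset.card_image_of_injective _ ginj]
  have hcard2 : (lam \ lam').card = (lam \ lam'').card := by
    rw [Finset.card_sdiff_of_subset hsub', Finset.card_sdiff_of_subset hsub'', hcard]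
  let e2 : {x // x ∈ lam \ lam'} ≃ {x // x ∈ lam \ lam''} := Finset.equivOfCardEq hcard2
  let τ : {x // x ∈ lam} → {x // x ∈ lam} := fun x =>
    if h : (x : ℕ) ∈ lam' then ⟨g.1 x, hsub'' (hmem'' _ h)⟩
    else
      let y := e2 ⟨x.1, Finset.mem_sdiff.mpr ⟨x.2, h⟩⟩
      ⟨y.1, (Finset.mem_sdiff.mp y.2).1⟩
  have τinj : Function.Injective τ := by
    rintro ⟨x, hx⟩ ⟨y, hy⟩ hxy
    by_cases h1 : x ∈ lam' <;> by_cases h2 : y ∈ lam'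
    · simp only [τ, dif_pos h1, dif_pos h2, Subtype.mk.injEq] at hxy
      exact Subtype.ext (ginj hxy)
    · exfalso
      simp only [τ, dif_pos h1, dif_neg h2, Subtype.mk.injEq] at hxy
      have hm1 : g.1 x ∈ lam'' := hmem'' _ h1
      have hm2 := (Finset.mem_sdiff.mp (e2 ⟨y, Finset.mem_sdiff.mpr ⟨hy, h2⟩⟩).2).2
      exact hm2 (hxy ▸ hm1)
    · exfalso
      simp only [τ, dif_neg h1, dif_pos h2, Subtype.mk.injEq] at hxy
      have hm1 : g.1 y ∈ lam'' := hmem'' _ h2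
      have hm2 := (Finset.mem_sdiff.mp (e2 ⟨x, Finset.mem_sdiff.mpr ⟨hx, h1⟩⟩).2).2
      exact hm2 (hxy ▸ hm1)
    · simp only [τ, dif_neg h1, dif_neg h2, Subtype.mk.injEq] at hxy
      have : e2 ⟨x, Finset.mem_sdiff.mpr ⟨hx, h1⟩⟩ = e2 ⟨y, Finset.mem_sdiff.mpr ⟨hy, h2⟩⟩ :=
        Subtype.ext hxy
      have h4 : x = y := Subtype.ext_iff.mp (e2.injective this)
      exact Subtype.ext h4
  have τbij : Function.Bijective τ := Finite.injective_iff_bijective.mp τinj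
  let σ : Equiv.Perm {x // x ∈ lam} := Equiv.ofBijective τ τbij
  let k1 : Equiv.Perm ℕ := Equiv.Perm.extendDomain σ (Equiv.refl {x // x ∈ lam})
  have kfix : ∀ n, n ∉ lam → k1 n = n := fun n hn =>
    Equiv.Perm.extendDomain_apply_not_subtype σ _ hn
  have kmem : ∀ n (hn : n ∈ lam), k1 n = (σ ⟨n, hn⟩ : ℕ) := by
    intro n hn
    simpa using Equiv.Perm.extendDomain_apply_subtype σ (Equiv.refl {x // x ∈ lam}) hn
  have k2 : ∀ n ∈ lam', k1 n = g.1 n := by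
    intro n hn
    rw [kmem n (hsub' hn)]
    show ((τ ⟨n, hsub' hn⟩ : {x // x ∈ lam}) : ℕ) = g.1 n
    simp only [τ, dif_pos hn]
  have himg : lam'.image k1 = lam'' := by
    rw [Finset.image_congr (g := g.1) (fun x hx => k2 x hx), hgl]
  have k4 : ∀ n, n ∉ lam' → k1 n ∉ lam'' := by
    intro n hn hmem
    rw [← himg] at hmem
    obtain ⟨m, hm, hmn⟩ := Finset.mem_image.mp hmem
    exact hn (k1.injective hmn ▸ hm)
  have h'fix1 : ∀ n, n ∉ lam' → h'.1 n = n := fun n hn => by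
    by_contra h; exact hn (hh' n (Or.inl h))
  have h'fix2 : ∀ n, n ∉ lam' → h'.2 n = 1 := fun n hn => by
    by_contra h; exact hn (hh' n (Or.inr h))
  have h''fix1 : ∀ n, n ∉ lam'' → h''.1 n = n := fun n hn => by
    by_contra h; exact hn (hh'' n (Or.inl h))
  have h''fix2 : ∀ n, n ∉ lam'' → h''.2 n = 1 := fun n hn => by
    by_contra h; exact hn (hh'' n (Or.inr h))
  have h'mem : ∀ n ∈ lam', h'.1 n ∈ lam' := by
    intro n hn
    by_contra hm
    have h1 : h'.1 (h'.1 n) = h'.1 n := h'fix1 _ hm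
    have h2 : h'.1 n = n := h'.1.injective h1
    exact hm (h2.symm ▸ hn)
  have hc1 : ∀ i, h''.1 i = g.1 (h'.1 (g.1⁻¹ i)) := by
    intro i
    have := congrArg (fun z : WreathElt F => z.1 i) hconj
    simpa [wmul, winv, Equiv.Perm.mul_apply] using this.symm
  have hc2 : ∀ i, h''.2 i = g.2 (h'.1 (g.1⁻¹ i)) * h'.2 (g.1⁻¹ i) * (g.2 (g.1⁻¹ i))⁻¹ := by
    intro i
    have := congrArg (fun z : WreathElt F => z.2 i) hconj
    simpa [wmul, winv, mul_assoc] using this.symm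
  refine ⟨(k1, fun n => if n ∈ lam then g.2 n else 1), ?_, ?_, ?_⟩
  · intro n hn
    by_contra hnl
    rcases hn with h | h
    · exact h (kfix n hnl)
    · exact h (if_neg hnl)
  · exact himg
  · refine Prod.ext ?_ ?_
    · refine Equiv.ext fun i => ?_
      show k1 (h'.1 (k1⁻¹ i)) = h''.1 i
      by_cases hj : (k1⁻¹ i : ℕ) ∈ lam'
      · have hi : g.1 (k1⁻¹ i) = i := by
          rw [← k2 _ hj]; exact (Equiv.apply_symm_apply k1 i : k1 (k1⁻¹ i) = i)
        have hgi : g.1⁻¹ i = k1⁻¹ i := g.1.injective (by rw [show g.1 (g.1⁻¹ i) = i by exact Equiv.apply_symm_apply g.1 i, hi])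
        rw [hc1, hgi, k2 _ (h'mem _ hj)]
      · rw [h'fix1 _ hj, show k1 (k1⁻¹ i) = i by exact Equiv.apply_symm_apply k1 i]
        have : (i : ℕ) ∉ lam'' := by
          have := k4 _ hj
          rwa [show k1 (k1⁻¹ i) = i by exact Equiv.apply_symm_apply k1 i] at this
        exact (h''fix1 _ this).symm
    · funext i
      show (if h'.1 (k1⁻¹ i) ∈ lam then g.2 (h'.1 (k1⁻¹ i)) else 1) * h'.2 (k1⁻¹ i) *
          (if (k1⁻¹ i : ℕ) ∈ lam then g.2 (k1⁻¹ i) else 1)⁻¹ = h''.2 i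
      by_cases hj : (k1⁻¹ i : ℕ) ∈ lam'
      · have hi : g.1 (k1⁻¹ i) = i := by
          rw [← k2 _ hj]; exact (Equiv.apply_symm_apply k1 i : k1 (k1⁻¹ i) = i)
        have hgi : g.1⁻¹ i = k1⁻¹ i := g.1.injective (by rw [show g.1 (g.1⁻¹ i) = i by exact Equiv.apply_symm_apply g.1 i, hi])
        rw [hc2, hgi, if_pos (hsub' (h'mem _ hj)), if_pos (hsub' hj)]
      · have hi'' : (i : ℕ) ∉ lam'' := by
          have := k4 _ hj
          rwa [show k1 (k1⁻¹ i) = i by exact Equiv.apply_symm_apply k1 i] at this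
        rw [h'fix1 _ hj, h'fix2 _ hj, h''fix2 _ hi'', mul_one, mul_inv_cancel]
end

section
/- Let G be a finite group acting on a finite poset Λ (with least element 0 and binary suprema) via order automorphisms, with a G-equivariant monotone family of subgroups G_λ satisfying the admissibility axioms. Then the free k-module A on the set Ω of G-orbits of partial elements, with multiplication induced from (λ',h')(λ'',h'') = (λ'∧λ'', h'h''), is a well-defined associative and commutative k-algebra; commutativity means that the structure constants satisfy P^{ω}_{ω',ω''} = P^{ω}_{ω'',ω'} for all orbits ω, ω', ω'' ∈ Ω. -/
open scoped Classical

/-- An admissible set of data `(Λ, G, η)` in the sense of Ivanov–Kerov /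
Alekseevski–Natanzon: a poset `Λ` with least element and binary suprema, a group
`G` acting on `Λ` by order automorphisms, and a `G`-equivariant monotone family
of finite subgroups `G_λ = η λ` satisfying the admissibility axioms (in
particular axiom 5: partial elements lying below a common `λ` that are conjugate
in `G` are conjugate in `G_λ`, and its consequence that a `G`-conjugacy class
meets each `G_λ` in at most one `G_λ`-class). -/
structure AdmissibleData (G Λ : Type*) [Group G] [PartialOrder Λ] [OrderBot Λ]
    [MulAction G Λ] where
  wedge : Λ → Λ → Λ
  isLUB_wedge : ∀ a b : Λ, IsLUB {a, b} (wedge a b)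
  eta : Λ → Subgroup G
  eta_mono : Monotone eta
  eta_bot : eta ⊥ = ⊥
  smul_le_iff : ∀ (g : G) (a b : Λ), a ≤ b ↔ g • a ≤ g • b
  eta_equivariant : ∀ (g : G) (a : Λ) (x : G), x ∈ eta a ↔ g * x * g⁻¹ ∈ eta (g • a)
  eta_stabilizes : ∀ (a : Λ) (g : G), g ∈ eta a → g • a = a
  eta_finite : ∀ a : Λ, (eta a : Set G).Finite
  pred_finite : ∀ a : Λ, {b : Λ | b ≤ a}.Finite
  conj_cond : ∀ (lam lam' lam'' : Λ) (h' h'' : G), lam' ≤ lam → lam'' ≤ lam →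
    h' ∈ eta lam' → h'' ∈ eta lam'' →
    (∃ g : G, g • lam' = lam'' ∧ g * h' * g⁻¹ = h'') →
    ∃ g ∈ eta lam, g • lam' = lam'' ∧ g * h' * g⁻¹ = h''
  conj_in_sub : ∀ (a : Λ) (x y : G), x ∈ eta a → y ∈ eta a → IsConj x y →
    ∃ g ∈ eta a, g * x * g⁻¹ = y

variable {G Λ : Type*} [Group G] [PartialOrder Λ] [OrderBot Λ] [MulAction G Λ]

/-- Partial elements: pairs `(λ, h)` with `h ∈ G_λ`. -/
abbrev PartialElt (D : AdmissibleData G Λ) : Type _ := {p : Λ × G // p.2 ∈ D.eta p.1}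

/-- Conjugation of partial elements: `g • (λ, h) = (g•λ, g h g⁻¹)`; two partial
elements are equivalent iff they lie in the same `G`-orbit (conjugacy class). -/
def orbSetoid (D : AdmissibleData G Λ) : Setoid (PartialElt D) where
  r p q := ∃ g : G, g • p.val.1 = q.val.1 ∧ g * p.val.2 * g⁻¹ = q.val.2
  iseqv := by
    constructor
    · intro p; exact ⟨1, by simp, by simp⟩
    · rintro p q ⟨g, h1, h2⟩
      exact ⟨g⁻¹, by rw [← h1, inv_smul_smul], by rw [← h2]; group⟩
    · rintro p q r ⟨g, h1, h2⟩ ⟨g', h1', h2'⟩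
      exact ⟨g' * g, by rw [mul_smul, h1, h1'], by rw [← h2', ← h2]; group⟩

/-- Conjugacy classes of partial elements (the index set `Ω` of the basis of the
generalized Ivanov–Kerov algebra). -/
abbrev Orb (D : AdmissibleData G Λ) : Type _ := Quotient (orbSetoid D)

/-- Structure constant of the generalized IK-algebra: the number of pairs of
partial elements in the classes `ω', ω''` whose product is exactly the given
partial element `(λ, h)`. -/
noncomputable def Pconst (D : AdmissibleData G Λ) (ω' ω'' : Orb D) (lam : Λ) (h : G) : ℕ :=
  Nat.card {pq : PartialElt D × PartialElt D //
    Quotient.mk (orbSetoid D) pq.1 = ω' ∧ Quotient.mk (orbSetoid D) pq.2 = ω'' ∧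
    D.wedge pq.1.val.1 pq.2.val.1 = lam ∧ pq.1.val.2 * pq.2.val.2 = h}

/-- `ξ(l', c; l)` computed from representatives: the number of `μ` in the
`G`-orbit of `lam'` with `μ ⪯ lam` and `h ∈ G_μ`. -/
noncomputable def xiConst (D : AdmissibleData G Λ) (lam' : Λ) (h : G) (lam : Λ) : ℕ :=
  Nat.card {μ : Λ // (∃ g : G, g • lam' = μ) ∧ μ ≤ lam ∧ h ∈ D.eta μ}

/-- Structure constant `S^{c(λ)}_{c'(λ), c''(λ)}` of the center `Z(k[G_λ])`: the
number of factorizations `h = a·b` inside `G_λ` with `a` conjugate (in `G`) to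
`x'` and `b` conjugate to `x''`. -/
noncomputable def Sconst (D : AdmissibleData G Λ) (x' x'' : G) (lam : Λ) (h : G) : ℕ :=
  Nat.card {ab : G × G // ab.1 ∈ D.eta lam ∧ ab.2 ∈ D.eta lam ∧
    IsConj x' ab.1 ∧ IsConj x'' ab.2 ∧ ab.1 * ab.2 = h}
namespace AdmissibleData

variable (D : AdmissibleData G Λ)

lemma wedge_eq {a b w : Λ} (h : IsLUB {a, b} w) : D.wedge a b = w :=
  (D.isLUB_wedge a b).unique h

lemma le_wedge_left (a b : Λ) : a ≤ D.wedge a b :=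
  (D.isLUB_wedge a b).1 (by simp)

lemma le_wedge_right (a b : Λ) : b ≤ D.wedge a b :=
  (D.isLUB_wedge a b).1 (by simp)

lemma wedge_le_iff (a b x : Λ) : D.wedge a b ≤ x ↔ a ≤ x ∧ b ≤ x := by
  constructor
  · intro h
    exact ⟨le_trans (D.le_wedge_left a b) h, le_trans (D.le_wedge_right a b) h⟩
  · rintro ⟨h1, h2⟩
    refine (D.isLUB_wedge a b).2 ?_
    rintro y (rfl | rfl) <;> assumption

lemma wedge_comm (a b : Λ) : D.wedge a b = D.wedge b a :=
  D.wedge_eq (by rw [Set.pair_comm]; exact D.isLUB_wedge b a)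

lemma wedge_assoc (a b c : Λ) : D.wedge (D.wedge a b) c = D.wedge a (D.wedge b c) := by
  apply le_antisymm
  · rw [wedge_le_iff, wedge_le_iff]
    refine ⟨⟨D.le_wedge_left _ _, ?_⟩, ?_⟩
    · exact le_trans (D.le_wedge_left b c) (D.le_wedge_right a _)
    · exact le_trans (D.le_wedge_right b c) (D.le_wedge_right a _)
  · rw [wedge_le_iff, wedge_le_iff]
    refine ⟨le_trans (D.le_wedge_left a b) (D.le_wedge_left _ _), ?_, ?_⟩
    · exact le_trans (D.le_wedge_right a b) (D.le_wedge_left _ _)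
    · exact D.le_wedge_right _ _

lemma smul_wedge (g : G) (a b : Λ) : D.wedge (g • a) (g • b) = g • D.wedge a b := by
  apply D.wedge_eq
  constructor
  · rintro y (rfl | rfl)
    · exact (D.smul_le_iff g a _).1 (D.le_wedge_left a b)
    · exact (D.smul_le_iff g b _).1 (D.le_wedge_right a b)
  · intro x hx
    have ha : g • a ≤ x := hx (by simp)
    have hb : g • b ≤ x := hx (by simp)
    have ha' : a ≤ g⁻¹ • x := by
      have := (D.smul_le_iff g⁻¹ (g • a) x).1 ha
      rwa [inv_smul_smul] at this
    have hb' : b ≤ g⁻¹ • x := by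
      have := (D.smul_le_iff g⁻¹ (g • b) x).1 hb
      rwa [inv_smul_smul] at this
    have := (D.smul_le_iff g (D.wedge a b) (g⁻¹ • x)).1
      ((D.wedge_le_iff a b _).2 ⟨ha', hb'⟩)
    rwa [smul_inv_smul] at this

/-- Product of partial elements. -/
def pmul (p q : PartialElt D) : PartialElt D :=
  ⟨(D.wedge p.val.1 q.val.1, p.val.2 * q.val.2),
    mul_mem (D.eta_mono (D.le_wedge_left _ _) p.prop)
      (D.eta_mono (D.le_wedge_right _ _) q.prop)⟩

/-- Conjugation action on partial elements. -/
def psmul (g : G) (p : PartialElt D) : PartialElt D :=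
  ⟨(g • p.val.1, g * p.val.2 * g⁻¹), (D.eta_equivariant g p.val.1 p.val.2).1 p.prop⟩

lemma psmul_psmul (g g' : G) (p : PartialElt D) :
    D.psmul g (D.psmul g' p) = D.psmul (g * g') p := by
  apply Subtype.ext
  apply Prod.ext
  · exact (mul_smul g g' p.val.1).symm
  · show g * (g' * p.val.2 * g'⁻¹) * g⁻¹ = (g * g') * p.val.2 * (g * g')⁻¹
    group

lemma psmul_one (p : PartialElt D) : D.psmul 1 p = p := by
  apply Subtype.ext
  apply Prod.ext
  · exact one_smul G p.val.1
  · show 1 * p.val.2 * 1⁻¹ = p.val.2; group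

lemma r_psmul (g : G) (p : PartialElt D) : (orbSetoid D).r p (D.psmul g p) :=
  ⟨g, rfl, rfl⟩

lemma mk_psmul (g : G) (p : PartialElt D) :
    Quotient.mk (orbSetoid D) (D.psmul g p) = Quotient.mk (orbSetoid D) p :=
  Quotient.sound ((orbSetoid D).symm (D.r_psmul g p))

lemma pmul_assoc (p q r : PartialElt D) :
    D.pmul (D.pmul p q) r = D.pmul p (D.pmul q r) := by
  apply Subtype.ext
  apply Prod.ext
  · exact D.wedge_assoc _ _ _
  · exact mul_assoc _ _ _

lemma psmul_pmul (g : G) (p q : PartialElt D) :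
    D.psmul g (D.pmul p q) = D.pmul (D.psmul g p) (D.psmul g q) := by
  apply Subtype.ext
  apply Prod.ext
  · exact (D.smul_wedge g p.val.1 q.val.1).symm
  · show g * (p.val.2 * q.val.2) * g⁻¹ = (g * p.val.2 * g⁻¹) * (g * q.val.2 * g⁻¹)
    group

/-- Well-definedness of the structure constants: conjugate partial elements
give the same count. -/
lemma Pconst_conj (ω' ω'' : Orb D) {p q : PartialElt D}
    (hpq : (orbSetoid D).r p q) :
    Pconst D ω' ω'' p.val.1 p.val.2 = Pconst D ω' ω'' q.val.1 q.val.2 := by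
  obtain ⟨g, hg1, hg2⟩ := hpq
  apply Nat.card_congr
  refine
    { toFun := fun x => ⟨(D.psmul g x.val.1, D.psmul g x.val.2), ?_, ?_, ?_, ?_⟩
      invFun := fun x => ⟨(D.psmul g⁻¹ x.val.1, D.psmul g⁻¹ x.val.2), ?_, ?_, ?_, ?_⟩
      left_inv := ?_
      right_inv := ?_ }
  · rw [D.mk_psmul]; exact x.prop.1
  · rw [D.mk_psmul]; exact x.prop.2.1
  · show D.wedge (g • x.val.1.val.1) (g • x.val.2.val.1) = q.val.1
    rw [D.smul_wedge, x.prop.2.2.1, hg1]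
  · show (g * x.val.1.val.2 * g⁻¹) * (g * x.val.2.val.2 * g⁻¹) = q.val.2
    calc (g * x.val.1.val.2 * g⁻¹) * (g * x.val.2.val.2 * g⁻¹)
        = g * (x.val.1.val.2 * x.val.2.val.2) * g⁻¹ := by group
      _ = g * p.val.2 * g⁻¹ := by rw [x.prop.2.2.2]
      _ = q.val.2 := hg2
  · rw [D.mk_psmul]; exact x.prop.1
  · rw [D.mk_psmul]; exact x.prop.2.1
  · show D.wedge (g⁻¹ • x.val.1.val.1) (g⁻¹ • x.val.2.val.1) = p.val.1
    rw [D.smul_wedge, x.prop.2.2.1, ← hg1, inv_smul_smul]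
  · show (g⁻¹ * x.val.1.val.2 * g⁻¹⁻¹) * (g⁻¹ * x.val.2.val.2 * g⁻¹⁻¹) = p.val.2
    calc (g⁻¹ * x.val.1.val.2 * g⁻¹⁻¹) * (g⁻¹ * x.val.2.val.2 * g⁻¹⁻¹)
        = g⁻¹ * (x.val.1.val.2 * x.val.2.val.2) * g := by group
      _ = g⁻¹ * q.val.2 * g := by rw [x.prop.2.2.2]
      _ = g⁻¹ * (g * p.val.2 * g⁻¹) * g := by rw [hg2]
      _ = p.val.2 := by group
  · intro x
    apply Subtype.ext
    apply Prod.ext <;> simp [D.psmul_psmul, D.psmul_one]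
  · intro x
    apply Subtype.ext
    apply Prod.ext <;> simp [D.psmul_psmul, D.psmul_one]

lemma psmul_one' {g : G} (hg : g = 1) (p : PartialElt D) : D.psmul g p = p := by
  rw [hg, D.psmul_one]

lemma conj_cancel (p q : PartialElt D) :
    D.psmul ((D.psmul p.val.2 p).val.2)⁻¹ (D.psmul p.val.2 q) = q := by
  rw [D.psmul_psmul]
  refine D.psmul_one' ?_ q
  show (p.val.2 * p.val.2 * p.val.2⁻¹)⁻¹ * p.val.2 = 1
  group

lemma conj_cancel' (b q : PartialElt D) :
    D.psmul ((D.psmul (b.val.2)⁻¹ b).val.2) (D.psmul (b.val.2)⁻¹ q) = q := by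
  rw [D.psmul_psmul]
  refine D.psmul_one' ?_ q
  show (b.val.2⁻¹ * b.val.2 * b.val.2⁻¹⁻¹) * b.val.2⁻¹ = 1
  group

/-- Commutativity of the structure constants. -/
lemma Pconst_comm (ω' ω'' : Orb D) (lam : Λ) (h : G) :
    Pconst D ω' ω'' lam h = Pconst D ω'' ω' lam h := by
  apply Nat.card_congr
  refine
    { toFun := fun x =>
        ⟨(D.psmul x.val.1.val.2 x.val.2, D.psmul x.val.1.val.2 x.val.1), ?_, ?_, ?_, ?_⟩
      invFun := fun y =>
        ⟨(D.psmul (y.val.2.val.2)⁻¹ y.val.2, D.psmul (y.val.2.val.2)⁻¹ y.val.1), ?_, ?_, ?_, ?_⟩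
      left_inv := ?_
      right_inv := ?_ }
  · rw [D.mk_psmul]; exact x.prop.2.1
  · rw [D.mk_psmul]; exact x.prop.1
  · have hple : x.val.1.val.1 ≤ lam := (D.le_wedge_left _ _).trans x.prop.2.2.1.le
    have hc : x.val.1.val.2 ∈ D.eta lam := D.eta_mono hple x.val.1.prop
    show D.wedge (x.val.1.val.2 • x.val.2.val.1) (x.val.1.val.2 • x.val.1.val.1) = lam
    rw [D.smul_wedge, D.wedge_comm, x.prop.2.2.1]
    exact D.eta_stabilizes lam _ hc
  · show (x.val.1.val.2 * x.val.2.val.2 * x.val.1.val.2⁻¹) *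
      (x.val.1.val.2 * x.val.1.val.2 * x.val.1.val.2⁻¹) = h
    refine Eq.trans ?_ x.prop.2.2.2; group
  · rw [D.mk_psmul]; exact y.prop.2.1
  · rw [D.mk_psmul]; exact y.prop.1
  · have hple : y.val.2.val.1 ≤ lam := (D.le_wedge_right _ _).trans y.prop.2.2.1.le
    have hd : (y.val.2.val.2)⁻¹ ∈ D.eta lam := inv_mem (D.eta_mono hple y.val.2.prop)
    show D.wedge (y.val.2.val.2⁻¹ • y.val.2.val.1) (y.val.2.val.2⁻¹ • y.val.1.val.1) = lam
    rw [D.smul_wedge, D.wedge_comm, y.prop.2.2.1]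
    exact D.eta_stabilizes lam _ hd
  · show (y.val.2.val.2⁻¹ * y.val.2.val.2 * y.val.2.val.2⁻¹⁻¹) *
      (y.val.2.val.2⁻¹ * y.val.1.val.2 * y.val.2.val.2⁻¹⁻¹) = h
    refine Eq.trans ?_ y.prop.2.2.2; group
  · intro x
    apply Subtype.ext
    exact Prod.ext (D.conj_cancel x.val.1 x.val.1) (D.conj_cancel x.val.1 x.val.2)
  · intro y
    apply Subtype.ext
    exact Prod.ext (D.conj_cancel' y.val.2 y.val.1) (D.conj_cancel' y.val.2 y.val.2)

lemma Pconst_eq_card (ω' ω'' : Orb D) (s : PartialElt D) :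
    Pconst D ω' ω'' s.val.1 s.val.2 =
      Nat.card {pq : PartialElt D × PartialElt D //
        Quotient.mk (orbSetoid D) pq.1 = ω' ∧ Quotient.mk (orbSetoid D) pq.2 = ω'' ∧
        D.pmul pq.1 pq.2 = s} := by
  apply Nat.card_congr
  refine Equiv.subtypeEquivRight fun pq => ?_
  constructor
  · rintro ⟨h1, h2, h3, h4⟩
    exact ⟨h1, h2, Subtype.ext (Prod.ext h3 h4)⟩
  · rintro ⟨h1, h2, h3⟩
    exact ⟨h1, h2, congrArg (fun z => z.val.1) h3, congrArg (fun z => z.val.2) h3⟩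

lemma card_fiber_mul {α β : Type*} [Fintype α] [Fintype β] (f : α → β) (n : ℕ)
    (hn : ∀ b : β, Nat.card {a : α // f a = b} = n) :
    Nat.card α = Nat.card β * n := by
  classical
  rw [Nat.card_eq_fintype_card, Nat.card_eq_fintype_card, ← Finset.card_univ,
    Finset.card_eq_sum_card_fiberwise (fun x _ => Finset.mem_univ (f x))]
  have key : ∀ b : β, (Finset.univ.filter fun a => f a = b).card = n := by
    intro b
    rw [← Fintype.card_subtype, ← Nat.card_eq_fintype_card]
    exact hn b
  rw [Finset.sum_congr rfl fun b _ => key b, Finset.sum_const, Finset.card_univ, smul_eq_mul]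

lemma card_transversal_sum {α : Type*} [Fintype α] {T : Finset (PartialElt D)}
    (key : α → PartialElt D)
    (hT : ∀ p : PartialElt D, ∃! t, t ∈ T ∧ (orbSetoid D).r p t) :
    Nat.card α = ∑ t ∈ T, Nat.card {x : α // (orbSetoid D).r (key x) t} := by
  classical
  set f : α → PartialElt D := fun x => (hT (key x)).choose with hf
  have hf1 : ∀ x, f x ∈ T ∧ (orbSetoid D).r (key x) (f x) := fun x => (hT (key x)).choose_spec.1
  have hf2 : ∀ x t, t ∈ T → (orbSetoid D).r (key x) t → f x = t := by
    intro x t ht hr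
    exact ((hT (key x)).choose_spec.2 t ⟨ht, hr⟩).symm
  rw [Nat.card_eq_fintype_card, ← Finset.card_univ,
    Finset.card_eq_sum_card_fiberwise (fun x _ => (hf1 x).1)]
  refine Finset.sum_congr rfl fun t ht => ?_
  rw [← Fintype.card_subtype, ← Nat.card_eq_fintype_card]
  exact Nat.card_congr (Equiv.subtypeEquivRight fun x =>
    ⟨fun h => h ▸ (hf1 x).2, fun h => hf2 x t ht h⟩)

lemma cardL [Fintype G] [Fintype Λ] (w1 w2 w3 : Orb D) (lam : Λ) (h : G)
    (t : PartialElt D) :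
    Nat.card {x : PartialElt D × PartialElt D × PartialElt D //
      Quotient.mk (orbSetoid D) x.1 = w1 ∧ Quotient.mk (orbSetoid D) x.2.1 = w2 ∧
      Quotient.mk (orbSetoid D) x.2.2 = w3 ∧
      (orbSetoid D).r (D.pmul x.1 x.2.1) t ∧
      (D.pmul (D.pmul x.1 x.2.1) x.2.2).val = (lam, h)} =
    Pconst D w1 w2 t.val.1 t.val.2 * Pconst D (Quotient.mk (orbSetoid D) t) w3 lam h := by
  classical
  set α := {x : PartialElt D × PartialElt D × PartialElt D //
      Quotient.mk (orbSetoid D) x.1 = w1 ∧ Quotient.mk (orbSetoid D) x.2.1 = w2 ∧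
      Quotient.mk (orbSetoid D) x.2.2 = w3 ∧
      (orbSetoid D).r (D.pmul x.1 x.2.1) t ∧
      (D.pmul (D.pmul x.1 x.2.1) x.2.2).val = (lam, h)} with hα
  set β := {sr : PartialElt D × PartialElt D //
      Quotient.mk (orbSetoid D) sr.1 = Quotient.mk (orbSetoid D) t ∧
      Quotient.mk (orbSetoid D) sr.2 = w3 ∧
      D.wedge sr.1.val.1 sr.2.val.1 = lam ∧ sr.1.val.2 * sr.2.val.2 = h} with hβ
  set f : α → β := fun x =>
    ⟨(D.pmul x.val.1 x.val.2.1, x.val.2.2), Quotient.sound x.prop.2.2.2.1,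
      x.prop.2.2.1, congrArg Prod.fst x.prop.2.2.2.2,
      congrArg Prod.snd x.prop.2.2.2.2⟩ with hfdef
  have hn : ∀ sr : β, Nat.card {x : α // f x = sr} =
      Pconst D w1 w2 t.val.1 t.val.2 := by
    intro sr
    have h1 : Nat.card {x : α // f x = sr} =
        Pconst D w1 w2 sr.val.1.val.1 sr.val.1.val.2 := by
      rw [D.Pconst_eq_card]
      apply Nat.card_congr
      refine
        { toFun := fun x =>
            ⟨(x.val.val.1, x.val.val.2.1), x.val.prop.1, x.val.prop.2.1,
              congrArg (fun z => z.val.1) x.prop⟩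
          invFun := fun y =>
            ⟨⟨(y.val.1, y.val.2, sr.val.2), y.prop.1, y.prop.2.1, sr.prop.2.1,
              by rw [y.prop.2.2]; exact Quotient.exact sr.prop.1,
              by rw [y.prop.2.2]; exact Prod.ext sr.prop.2.2.1 sr.prop.2.2.2⟩,
              Subtype.ext (Prod.ext y.prop.2.2 rfl)⟩
          left_inv := fun x => Subtype.ext (Subtype.ext
            (Prod.ext rfl (Prod.ext rfl (congrArg (fun z => z.val.2) x.prop).symm)))
          right_inv := fun y => Subtype.ext rfl }
    rw [h1]
    exact D.Pconst_conj w1 w2 (Quotient.exact sr.prop.1)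
  rw [card_fiber_mul f (Pconst D w1 w2 t.val.1 t.val.2) hn]
  exact Nat.mul_comm _ _

lemma cardR [Fintype G] [Fintype Λ] (w1 w2 w3 : Orb D) (lam : Λ) (h : G)
    (t : PartialElt D) :
    Nat.card {x : PartialElt D × PartialElt D × PartialElt D //
      Quotient.mk (orbSetoid D) x.1 = w1 ∧ Quotient.mk (orbSetoid D) x.2.1 = w2 ∧
      Quotient.mk (orbSetoid D) x.2.2 = w3 ∧
      (orbSetoid D).r (D.pmul x.2.1 x.2.2) t ∧
      (D.pmul x.1 (D.pmul x.2.1 x.2.2)).val = (lam, h)} =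
    Pconst D w2 w3 t.val.1 t.val.2 * Pconst D w1 (Quotient.mk (orbSetoid D) t) lam h := by
  classical
  set α := {x : PartialElt D × PartialElt D × PartialElt D //
      Quotient.mk (orbSetoid D) x.1 = w1 ∧ Quotient.mk (orbSetoid D) x.2.1 = w2 ∧
      Quotient.mk (orbSetoid D) x.2.2 = w3 ∧
      (orbSetoid D).r (D.pmul x.2.1 x.2.2) t ∧
      (D.pmul x.1 (D.pmul x.2.1 x.2.2)).val = (lam, h)} with hα
  set β := {sr : PartialElt D × PartialElt D //
      Quotient.mk (orbSetoid D) sr.1 = w1 ∧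
      Quotient.mk (orbSetoid D) sr.2 = Quotient.mk (orbSetoid D) t ∧
      D.wedge sr.1.val.1 sr.2.val.1 = lam ∧ sr.1.val.2 * sr.2.val.2 = h} with hβ
  set f : α → β := fun x =>
    ⟨(x.val.1, D.pmul x.val.2.1 x.val.2.2), x.prop.1,
      Quotient.sound x.prop.2.2.2.1, congrArg Prod.fst x.prop.2.2.2.2,
      congrArg Prod.snd x.prop.2.2.2.2⟩ with hfdef
  have hn : ∀ sr : β, Nat.card {x : α // f x = sr} =
      Pconst D w2 w3 t.val.1 t.val.2 := by
    intro sr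
    have h1 : Nat.card {x : α // f x = sr} =
        Pconst D w2 w3 sr.val.2.val.1 sr.val.2.val.2 := by
      rw [D.Pconst_eq_card]
      apply Nat.card_congr
      refine
        { toFun := fun x =>
            ⟨(x.val.val.2.1, x.val.val.2.2), x.val.prop.2.1, x.val.prop.2.2.1,
              congrArg (fun z => z.val.2) x.prop⟩
          invFun := fun y =>
            ⟨⟨(sr.val.1, y.val.1, y.val.2), sr.prop.1, y.prop.1, y.prop.2.1,
              by rw [y.prop.2.2]; exact Quotient.exact sr.prop.2.1,
              by rw [y.prop.2.2]; exact Prod.ext sr.prop.2.2.1 sr.prop.2.2.2⟩,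
              Subtype.ext (Prod.ext rfl y.prop.2.2)⟩
          left_inv := fun x => Subtype.ext (Subtype.ext
            (Prod.ext (congrArg (fun z => z.val.1) x.prop).symm (Prod.ext rfl rfl)))
          right_inv := fun y => Subtype.ext rfl }
    rw [h1]
    exact D.Pconst_conj w2 w3 (Quotient.exact sr.prop.2.1)
  rw [card_fiber_mul f (Pconst D w2 w3 t.val.1 t.val.2) hn]
  exact Nat.mul_comm _ _

end AdmissibleData

/-- For a finite group `G` acting on a finite poset `Λ` with an
admissible family of subgroups, the free `k`-module on the set `Ω` of conjugacy
classes of partial elements, with multiplication induced from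
`(λ',h')(λ'',h'') = (λ'∧λ'', h'h'')`, is a well-defined associative commutative
`k`-algebra: the structure constants `P` are independent of the chosen
representative, symmetric in the two lower indices (commutativity), and satisfy
the associativity identity (summation over a transversal `T` of the conjugacy
classes of partial elements). -/
theorem stmt10 {k : Type*} [Field k] [Fintype G] [Fintype Λ]
    (D : AdmissibleData G Λ) :
    -- well-definedness: independence of the representative of the target class
    (∀ (ω' ω'' : Orb D) (p q : PartialElt D), (orbSetoid D).r p q →
      Pconst D ω' ω'' p.val.1 p.val.2 = Pconst D ω' ω'' q.val.1 q.val.2) ∧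
    -- commutativity: P^{ω}_{ω',ω''} = P^{ω}_{ω'',ω'}
    (∀ (ω' ω'' : Orb D) (lam : Λ) (h : G),
      Pconst D ω' ω'' lam h = Pconst D ω'' ω' lam h) ∧
    -- associativity of the induced multiplication
    (∀ T : Finset (PartialElt D),
      (∀ p : PartialElt D, ∃! t, t ∈ T ∧ (orbSetoid D).r p t) →
      ∀ (ω' ω'' ω''' : Orb D) (lam : Λ) (h : G),
        ∑ t ∈ T, Pconst D ω' ω'' t.val.1 t.val.2 *
            Pconst D (Quotient.mk (orbSetoid D) t) ω''' lam h =
        ∑ t ∈ T, Pconst D ω'' ω''' t.val.1 t.val.2 *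
            Pconst D ω' (Quotient.mk (orbSetoid D) t) lam h) := by
  classical
  refine ⟨fun w1 w2 p q hpq => D.Pconst_conj w1 w2 hpq,
    fun w1 w2 lam h => D.Pconst_comm w1 w2 lam h, ?_⟩
  intro T hT w1 w2 w3 lam h
  have hL : ∑ t ∈ T, Pconst D w1 w2 t.val.1 t.val.2 *
      Pconst D (Quotient.mk (orbSetoid D) t) w3 lam h =
      Nat.card {x : PartialElt D × PartialElt D × PartialElt D //
        Quotient.mk (orbSetoid D) x.1 = w1 ∧ Quotient.mk (orbSetoid D) x.2.1 = w2 ∧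
        Quotient.mk (orbSetoid D) x.2.2 = w3 ∧
        (D.pmul (D.pmul x.1 x.2.1) x.2.2).val = (lam, h)} := by
    rw [D.card_transversal_sum
      (fun x : {x : PartialElt D × PartialElt D × PartialElt D //
        Quotient.mk (orbSetoid D) x.1 = w1 ∧ Quotient.mk (orbSetoid D) x.2.1 = w2 ∧
        Quotient.mk (orbSetoid D) x.2.2 = w3 ∧
        (D.pmul (D.pmul x.1 x.2.1) x.2.2).val = (lam, h)} =>
        D.pmul x.val.1 x.val.2.1) hT]
    refine Finset.sum_congr rfl fun t ht => ?_
    rw [← D.cardL w1 w2 w3 lam h t]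
    apply Nat.card_congr
    exact
      { toFun := fun y => ⟨⟨y.val, y.prop.1, y.prop.2.1, y.prop.2.2.1,
          y.prop.2.2.2.2⟩, y.prop.2.2.2.1⟩
        invFun := fun x => ⟨x.val.val, x.val.prop.1, x.val.prop.2.1,
          x.val.prop.2.2.1, x.prop, x.val.prop.2.2.2⟩
        left_inv := fun y => rfl
        right_inv := fun x => rfl }
  have hR : ∑ t ∈ T, Pconst D w2 w3 t.val.1 t.val.2 *
      Pconst D w1 (Quotient.mk (orbSetoid D) t) lam h =
      Nat.card {x : PartialElt D × PartialElt D × PartialElt D //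
        Quotient.mk (orbSetoid D) x.1 = w1 ∧ Quotient.mk (orbSetoid D) x.2.1 = w2 ∧
        Quotient.mk (orbSetoid D) x.2.2 = w3 ∧
        (D.pmul x.1 (D.pmul x.2.1 x.2.2)).val = (lam, h)} := by
    rw [D.card_transversal_sum
      (fun x : {x : PartialElt D × PartialElt D × PartialElt D //
        Quotient.mk (orbSetoid D) x.1 = w1 ∧ Quotient.mk (orbSetoid D) x.2.1 = w2 ∧
        Quotient.mk (orbSetoid D) x.2.2 = w3 ∧
        (D.pmul x.1 (D.pmul x.2.1 x.2.2)).val = (lam, h)} =>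
        D.pmul x.val.2.1 x.val.2.2) hT]
    refine Finset.sum_congr rfl fun t ht => ?_
    rw [← D.cardR w1 w2 w3 lam h t]
    apply Nat.card_congr
    exact
      { toFun := fun y => ⟨⟨y.val, y.prop.1, y.prop.2.1, y.prop.2.2.1,
          y.prop.2.2.2.2⟩, y.prop.2.2.2.1⟩
        invFun := fun x => ⟨x.val.val, x.val.prop.1, x.val.prop.2.1,
          x.val.prop.2.2.1, x.prop, x.val.prop.2.2.2⟩
        left_inv := fun y => rfl
        right_inv := fun x => rfl }
  rw [hL, hR]
  apply Nat.card_congr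
  refine Equiv.subtypeEquivRight fun x => ?_
  rw [D.pmul_assoc]
end

section
/- (Main Lemma) For G-orbits l, l', l'' in Λ and G-conjugacy classes c, c', c'': ξ(l',c';l)·ξ(l'',c'';l)·S^{c(l)}_{c'(l),c''(l)} = Σ_{l̃} ξ(l̃,c;l)·P^{(l̃,c)}_{(l',c'),(l'',c'')}, where the sum runs over orbits l̃ ⪯ l. -/
open scoped Classical

variable {G Λ : Type*} [Group G] [PartialOrder Λ] [OrderBot Λ] [MulAction G Λ]

section IKAux

variable {G Λ : Type*} [Group G] [PartialOrder Λ] [OrderBot Λ] [MulAction G Λ]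
variable (D : AdmissibleData G Λ)

/-- Conjugation of a partial element. -/
def pact (g : G) (p : PartialElt D) : PartialElt D :=
  ⟨(g • p.val.1, g * p.val.2 * g⁻¹), (D.eta_equivariant g _ _).mp p.2⟩

@[simp] lemma pact_fst (g : G) (p : PartialElt D) : (pact D g p).val.1 = g • p.val.1 := rfl

@[simp] lemma pact_snd (g : G) (p : PartialElt D) : (pact D g p).val.2 = g * p.val.2 * g⁻¹ := rfl

lemma pact_pact (g g' : G) (p : PartialElt D) : pact D g (pact D g' p) = pact D (g * g') p := by
  apply Subtype.ext; apply Prod.ext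
  · simp [pact, mul_smul]
  · simp only [pact]; group

@[simp] lemma pact_one (p : PartialElt D) : pact D 1 p = p := by
  apply Subtype.ext; apply Prod.ext <;> simp [pact]

@[simp] lemma pact_inv_pact (g : G) (p : PartialElt D) : pact D g⁻¹ (pact D g p) = p := by
  rw [pact_pact, inv_mul_cancel, pact_one]

@[simp] lemma pact_pact_inv (g : G) (p : PartialElt D) : pact D g (pact D g⁻¹ p) = p := by
  rw [pact_pact, mul_inv_cancel, pact_one]

lemma mk_pact (g : G) (p : PartialElt D) :
    Quotient.mk (orbSetoid D) (pact D g p) = Quotient.mk (orbSetoid D) p :=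
  (Quot.sound (⟨g, rfl, rfl⟩ : (orbSetoid D).r p (pact D g p))).symm

lemma inv_smul_lam_eq (k : G) (a : Λ) (hk : k ∈ D.eta a) : k⁻¹ • a = a := by
  conv_lhs => rw [← D.eta_stabilizes a k hk]
  rw [inv_smul_smul]

lemma le_wedge_left (a b : Λ) : a ≤ D.wedge a b :=
  (D.isLUB_wedge a b).1 (Set.mem_insert _ _)

lemma le_wedge_right (a b : Λ) : b ≤ D.wedge a b :=
  (D.isLUB_wedge a b).1 (by simp)

lemma wedge_le {a b c : Λ} (ha : a ≤ c) (hb : b ≤ c) : D.wedge a b ≤ c := by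
  refine (D.isLUB_wedge a b).2 ?_
  rintro y hy
  simp only [Set.mem_insert_iff, Set.mem_singleton_iff] at hy
  rcases hy with rfl | rfl
  exacts [ha, hb]

lemma wedge_smul (g : G) (a b : Λ) : D.wedge (g • a) (g • b) = g • D.wedge a b := by
  have h1 := D.isLUB_wedge a b
  refine (D.isLUB_wedge (g • a) (g • b)).unique ?_
  constructor
  · intro x hx
    simp only [Set.mem_insert_iff, Set.mem_singleton_iff] at hx
    rcases hx with rfl | rfl
    · exact (D.smul_le_iff g a _).mp (le_wedge_left D a b)
    · exact (D.smul_le_iff g b _).mp (le_wedge_right D a b)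
  · intro x hx
    have hxa : g • a ≤ x := hx (Set.mem_insert _ _)
    have hxb : g • b ≤ x := hx (by simp)
    have ha : a ≤ g⁻¹ • x := by
      have := (D.smul_le_iff g⁻¹ (g • a) x).mp hxa; rwa [inv_smul_smul] at this
    have hb : b ≤ g⁻¹ • x := by
      have := (D.smul_le_iff g⁻¹ (g • b) x).mp hxb; rwa [inv_smul_smul] at this
    have hw : D.wedge a b ≤ g⁻¹ • x := wedge_le D ha hb
    have := (D.smul_le_iff g _ _).mp hw
    rwa [smul_inv_smul] at this

/-- If `(lam', h')` and `(ν, a)` are partial elements with `ν` in the orbit of `lam'`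
and `a` conjugate to `h'`, then they are conjugate as partial elements. -/
lemma equiv_of_conj (lam' ν : Λ) (h' a : G) (hh' : h' ∈ D.eta lam') (ha : a ∈ D.eta ν)
    (horb : ∃ g : G, g • lam' = ν) (hc : IsConj h' a) :
    ∃ g : G, g • lam' = ν ∧ g * h' * g⁻¹ = a := by
  obtain ⟨g0, hg0⟩ := horb
  have h1 : g0 * h' * g0⁻¹ ∈ D.eta ν := by
    rw [← hg0]; exact (D.eta_equivariant g0 lam' h').mp hh'
  have h2 : IsConj (g0 * h' * g0⁻¹) a := by
    refine IsConj.trans ?_ hc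
    exact (isConj_iff.mpr ⟨g0, rfl⟩).symm
  obtain ⟨k, hk, hk2⟩ := D.conj_in_sub ν _ _ h1 ha h2
  refine ⟨k * g0, ?_, ?_⟩
  · rw [mul_smul, hg0, D.eta_stabilizes ν k hk]
  · rw [← hk2]; group

lemma finite_le_subtype (lam : Λ) : Finite {p : PartialElt D // p.val.1 ≤ lam} := by
  haveI : Finite {b : Λ // b ≤ lam} := (D.pred_finite lam).to_subtype
  haveI : Finite (D.eta lam : Set G) := (D.eta_finite lam).to_subtype
  apply Finite.of_injective (fun p =>
    ((⟨p.val.val.1, p.2⟩ : {b : Λ // b ≤ lam}),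
     (⟨p.val.val.2, D.eta_mono p.2 p.val.2⟩ : (D.eta lam : Set G))))
  intro p q hpq
  simp only [Prod.mk.injEq, Subtype.mk.injEq] at hpq
  exact Subtype.ext (Subtype.ext (Prod.ext hpq.1 hpq.2))

lemma finite_pairs (lam : Λ) (P : PartialElt D × PartialElt D → Prop)
    (hP : ∀ pq, P pq → pq.1.val.1 ≤ lam ∧ pq.2.val.1 ≤ lam) :
    Finite {pq : PartialElt D × PartialElt D // P pq} := by
  haveI := finite_le_subtype D lam
  apply Finite.of_injective (fun x =>
    ((⟨x.val.1, (hP x.val x.2).1⟩ : {p : PartialElt D // p.val.1 ≤ lam}),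
     (⟨x.val.2, (hP x.val x.2).2⟩ : {p : PartialElt D // p.val.1 ≤ lam})))
  intro p q hpq
  simp only [Prod.mk.injEq, Subtype.mk.injEq] at hpq
  exact Subtype.ext (Prod.ext hpq.1 hpq.2)

lemma conj_cancel (k a b : G) (hk : k * a * k⁻¹ = b) : k⁻¹ * b * k⁻¹⁻¹ = a := by
  rw [← hk]; group

lemma h_mem_wedge (pq : PartialElt D × PartialElt D) :
    pq.1.val.2 * pq.2.val.2 ∈ D.eta (D.wedge pq.1.val.1 pq.2.val.1) :=
  mul_mem (D.eta_mono (le_wedge_left D _ _) pq.1.2) (D.eta_mono (le_wedge_right D _ _) pq.2.2)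

end IKAux
section IKMain

variable {G Λ : Type*} [Group G] [PartialOrder Λ] [OrderBot Λ] [MulAction G Λ]
variable (D : AdmissibleData G Λ)

lemma lhs_card (lam lam' lam'' : Λ) (h h' h'' : G)
    (hmem' : h' ∈ D.eta lam') (hmem'' : h'' ∈ D.eta lam'')
    (hmem'l : h' ∈ D.eta lam) (hmem''l : h'' ∈ D.eta lam) :
    xiConst D lam' h' lam * xiConst D lam'' h'' lam * Sconst D h' h'' lam h =
    Nat.card {pq : PartialElt D × PartialElt D //
      Quotient.mk (orbSetoid D) pq.1 = Quotient.mk (orbSetoid D) ⟨(lam', h'), hmem'⟩ ∧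
      Quotient.mk (orbSetoid D) pq.2 = Quotient.mk (orbSetoid D) ⟨(lam'', h''), hmem''⟩ ∧
      pq.1.val.2 * pq.2.val.2 = h ∧ D.wedge pq.1.val.1 pq.2.val.1 ≤ lam} := by
  classical
  -- choice of conjugators inside `G_lam`
  choose k1 hk1mem hk1eq using fun (a : G) (ha : a ∈ D.eta lam) (hc : IsConj h' a) =>
    D.conj_in_sub lam h' a hmem'l ha hc
  choose k2 hk2mem hk2eq using fun (b : G) (hb : b ∈ D.eta lam) (hc : IsConj h'' b) =>
    D.conj_in_sub lam h'' b hmem''l hb hc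
  have key : Nat.card ({ab : G × G // ab.1 ∈ D.eta lam ∧ ab.2 ∈ D.eta lam ∧
        IsConj h' ab.1 ∧ IsConj h'' ab.2 ∧ ab.1 * ab.2 = h} ×
      ({ν : Λ // (∃ g : G, g • lam' = ν) ∧ ν ≤ lam ∧ h' ∈ D.eta ν} ×
       {ν : Λ // (∃ g : G, g • lam'' = ν) ∧ ν ≤ lam ∧ h'' ∈ D.eta ν})) =
      Nat.card {pq : PartialElt D × PartialElt D //
      Quotient.mk (orbSetoid D) pq.1 = Quotient.mk (orbSetoid D) ⟨(lam', h'), hmem'⟩ ∧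
      Quotient.mk (orbSetoid D) pq.2 = Quotient.mk (orbSetoid D) ⟨(lam'', h''), hmem''⟩ ∧
      pq.1.val.2 * pq.2.val.2 = h ∧ D.wedge pq.1.val.1 pq.2.val.1 ≤ lam} := by
    have hcond : ∀ x : {ab : G × G // ab.1 ∈ D.eta lam ∧ ab.2 ∈ D.eta lam ∧
        IsConj h' ab.1 ∧ IsConj h'' ab.2 ∧ ab.1 * ab.2 = h} ×
      ({ν : Λ // (∃ g : G, g • lam' = ν) ∧ ν ≤ lam ∧ h' ∈ D.eta ν} ×
       {ν : Λ // (∃ g : G, g • lam'' = ν) ∧ ν ≤ lam ∧ h'' ∈ D.eta ν}),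
        Quotient.mk (orbSetoid D) (pact D (k1 x.1.val.1 x.1.2.1 x.1.2.2.2.1) ⟨(x.2.1.val, h'), x.2.1.2.2.2⟩)
          = Quotient.mk (orbSetoid D) (⟨(lam', h'), hmem'⟩ : PartialElt D) ∧
        Quotient.mk (orbSetoid D) (pact D (k2 x.1.val.2 x.1.2.2.1 x.1.2.2.2.2.1) ⟨(x.2.2.val, h''), x.2.2.2.2.2⟩)
          = Quotient.mk (orbSetoid D) (⟨(lam'', h''), hmem''⟩ : PartialElt D) ∧
        (pact D (k1 x.1.val.1 x.1.2.1 x.1.2.2.2.1) ⟨(x.2.1.val, h'), x.2.1.2.2.2⟩).val.2 *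
          (pact D (k2 x.1.val.2 x.1.2.2.1 x.1.2.2.2.2.1) ⟨(x.2.2.val, h''), x.2.2.2.2.2⟩).val.2 = h ∧
        D.wedge (pact D (k1 x.1.val.1 x.1.2.1 x.1.2.2.2.1) ⟨(x.2.1.val, h'), x.2.1.2.2.2⟩).val.1
          (pact D (k2 x.1.val.2 x.1.2.2.1 x.1.2.2.2.2.1) ⟨(x.2.2.val, h''), x.2.2.2.2.2⟩).val.1 ≤ lam := by
      rintro ⟨⟨⟨a, b⟩, ha, hb, hca, hcb, hab⟩, ⟨ν1, hν1orb, hν1le, hν1m⟩, ⟨ν2, hν2orb, hν2le, hν2m⟩⟩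
      dsimp only
      refine ⟨?_, ?_, ?_, ?_⟩
      · rw [mk_pact]
        obtain ⟨g, hg1, hg2⟩ := equiv_of_conj D lam' ν1 h' h' hmem' hν1m hν1orb (IsConj.refl h')
        exact (Quot.sound (⟨g, hg1, hg2⟩ :
          (orbSetoid D).r ⟨(lam', h'), hmem'⟩ ⟨(ν1, h'), hν1m⟩)).symm
      · rw [mk_pact]
        obtain ⟨g, hg1, hg2⟩ := equiv_of_conj D lam'' ν2 h'' h'' hmem'' hν2m hν2orb (IsConj.refl h'')
        exact (Quot.sound (⟨g, hg1, hg2⟩ :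
          (orbSetoid D).r ⟨(lam'', h''), hmem''⟩ ⟨(ν2, h''), hν2m⟩)).symm
      · simp only [pact_snd]
        rw [hk1eq a ha hca, hk2eq b hb hcb]
        exact hab
      · simp only [pact_fst]
        refine wedge_le D ?_ ?_
        · have h1 : k1 a ha hca • lam = lam := D.eta_stabilizes lam _ (hk1mem a ha hca)
          have := (D.smul_le_iff (k1 a ha hca) ν1 lam).mp hν1le
          rwa [h1] at this
        · have h1 : k2 b hb hcb • lam = lam := D.eta_stabilizes lam _ (hk2mem b hb hcb)
          have := (D.smul_le_iff (k2 b hb hcb) ν2 lam).mp hν2le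
          rwa [h1] at this
    apply Nat.card_eq_of_bijective (f := fun x =>
      ⟨(pact D (k1 x.1.val.1 x.1.2.1 x.1.2.2.2.1) ⟨(x.2.1.val, h'), x.2.1.2.2.2⟩,
        pact D (k2 x.1.val.2 x.1.2.2.1 x.1.2.2.2.2.1) ⟨(x.2.2.val, h''), x.2.2.2.2.2⟩), hcond x⟩)
    constructor
    · rintro ⟨s1, n1, m1⟩ ⟨s2, n2, m2⟩ huv
      simp only [Subtype.mk.injEq, Prod.mk.injEq] at huv
      obtain ⟨hP, hQ⟩ := huv
      have hs : s1 = s2 := by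
        apply Subtype.ext; apply Prod.ext
        · have e1 := congrArg (fun p : PartialElt D => p.val.2) hP
          simp only [pact_snd] at e1
          rw [hk1eq s1.val.1 s1.2.1 s1.2.2.2.1, hk1eq s2.val.1 s2.2.1 s2.2.2.2.1] at e1
          exact e1
        · have e1 := congrArg (fun p : PartialElt D => p.val.2) hQ
          simp only [pact_snd] at e1
          rw [hk2eq s1.val.2 s1.2.2.1 s1.2.2.2.2.1, hk2eq s2.val.2 s2.2.2.1 s2.2.2.2.2.1] at e1
          exact e1
      subst hs
      have hn : n1 = n2 := by
        apply Subtype.ext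
        have e1 := congrArg (fun p : PartialElt D => p.val.1) hP
        simp only [pact_fst] at e1
        exact smul_left_cancel _ e1
      have hm : m1 = m2 := by
        apply Subtype.ext
        have e1 := congrArg (fun p : PartialElt D => p.val.1) hQ
        simp only [pact_fst] at e1
        exact smul_left_cancel _ e1
      rw [hn, hm]
    · rintro ⟨⟨p, q⟩, c1, c2, c3, c4⟩
      dsimp only at c1 c2 c3 c4
      have hpl : p.val.1 ≤ lam := le_trans (le_wedge_left D _ _) c4
      have hql : q.val.1 ≤ lam := le_trans (le_wedge_right D _ _) c4
      have hpe : p.val.2 ∈ D.eta lam := D.eta_mono hpl p.2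
      have hqe : q.val.2 ∈ D.eta lam := D.eta_mono hql q.2
      obtain ⟨g1, hg11, hg12⟩ := Quotient.exact c1
      obtain ⟨g2, hg21, hg22⟩ := Quotient.exact c2
      have hg11' : g1 • p.val.1 = lam' := hg11
      have hg12' : g1 * p.val.2 * g1⁻¹ = h' := hg12
      have hg21' : g2 • q.val.1 = lam'' := hg21
      have hg22' : g2 * q.val.2 * g2⁻¹ = h'' := hg22
      have hcp : IsConj h' p.val.2 := isConj_iff.mpr ⟨g1⁻¹, conj_cancel g1 _ _ hg12'⟩
      have hcq : IsConj h'' q.val.2 := isConj_iff.mpr ⟨g2⁻¹, conj_cancel g2 _ _ hg22'⟩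
      refine ⟨⟨⟨(p.val.2, q.val.2), hpe, hqe, hcp, hcq, c3⟩,
        ⟨(k1 p.val.2 hpe hcp)⁻¹ • p.val.1, ⟨(k1 p.val.2 hpe hcp)⁻¹ * g1⁻¹, ?_⟩, ?_, ?_⟩,
        ⟨(k2 q.val.2 hqe hcq)⁻¹ • q.val.1, ⟨(k2 q.val.2 hqe hcq)⁻¹ * g2⁻¹, ?_⟩, ?_, ?_⟩⟩, ?_⟩
      · rw [mul_smul, ← hg11', inv_smul_smul]
      · have := (D.smul_le_iff (k1 p.val.2 hpe hcp)⁻¹ p.val.1 lam).mp hpl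
        rwa [inv_smul_lam_eq D _ _ (hk1mem p.val.2 hpe hcp)] at this
      · have h1 := (D.eta_equivariant (k1 p.val.2 hpe hcp)⁻¹ p.val.1 p.val.2).mp p.2
        have h2 : (k1 p.val.2 hpe hcp)⁻¹ * p.val.2 * (k1 p.val.2 hpe hcp)⁻¹⁻¹ = h' :=
          conj_cancel _ _ _ (hk1eq p.val.2 hpe hcp)
        rwa [h2] at h1
      · rw [mul_smul, ← hg21', inv_smul_smul]
      · have := (D.smul_le_iff (k2 q.val.2 hqe hcq)⁻¹ q.val.1 lam).mp hql
        rwa [inv_smul_lam_eq D _ _ (hk2mem q.val.2 hqe hcq)] at this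
      · have h1 := (D.eta_equivariant (k2 q.val.2 hqe hcq)⁻¹ q.val.1 q.val.2).mp q.2
        have h2 : (k2 q.val.2 hqe hcq)⁻¹ * q.val.2 * (k2 q.val.2 hqe hcq)⁻¹⁻¹ = h'' :=
          conj_cancel _ _ _ (hk2eq q.val.2 hqe hcq)
        rwa [h2] at h1
      · apply Subtype.ext
        dsimp only
        refine Prod.ext (Subtype.ext (Prod.ext ?_ ?_)) (Subtype.ext (Prod.ext ?_ ?_))
        · simp only [pact_fst]; exact smul_inv_smul _ _
        · simp only [pact_snd]; exact hk1eq p.val.2 hpe hcp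
        · simp only [pact_fst]; exact smul_inv_smul _ _
        · simp only [pact_snd]; exact hk2eq q.val.2 hqe hcq
  rw [← key, Nat.card_prod, Nat.card_prod, xiConst, xiConst, Sconst]
  ring

end IKMain
section IKRhs

variable {G Λ : Type*} [Group G] [PartialOrder Λ] [OrderBot Λ] [MulAction G Λ]
variable (D : AdmissibleData G Λ)

lemma nat_card_sigma {ι : Type*} [Fintype ι] (f : ι → Type*) [∀ i, Finite (f i)] :
    Nat.card (Sigma f) = ∑ i, Nat.card (f i) := by
  haveI := fun i => Fintype.ofFinite (f i)
  simp only [Nat.card_eq_fintype_card]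
  exact Fintype.card_sigma

lemma fiber_card (lam : Λ) (h : G) (t : Λ) (htlam : t ≤ lam) (hht : h ∈ D.eta t)
    (ω' ω'' : Orb D) :
    Nat.card {pq : PartialElt D × PartialElt D //
      Quotient.mk (orbSetoid D) pq.1 = ω' ∧ Quotient.mk (orbSetoid D) pq.2 = ω'' ∧
      pq.1.val.2 * pq.2.val.2 = h ∧ D.wedge pq.1.val.1 pq.2.val.1 ≤ lam ∧
      (∃ g : G, g • D.wedge pq.1.val.1 pq.2.val.1 = t)} =
    xiConst D t h lam * Pconst D ω' ω'' t h := by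
  classical
  have horb : ∀ x : {μ : Λ // (∃ g : G, g • t = μ) ∧ μ ≤ lam ∧ h ∈ D.eta μ},
      ∃ g : G, g • x.val = t ∧ g * h * g⁻¹ = h := by
    rintro ⟨μ, ⟨g, hg⟩, hμlam, hμh⟩
    exact equiv_of_conj D μ t h h hμh hht ⟨g⁻¹, by rw [← hg, inv_smul_smul]⟩ (IsConj.refl h)
  choose gf hgf1 hgf2 using horb
  have hw : ∀ (x : {μ : Λ // (∃ g : G, g • t = μ) ∧ μ ≤ lam ∧ h ∈ D.eta μ})
      (r : {pq : PartialElt D × PartialElt D //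
        Quotient.mk (orbSetoid D) pq.1 = ω' ∧ Quotient.mk (orbSetoid D) pq.2 = ω'' ∧
        D.wedge pq.1.val.1 pq.2.val.1 = t ∧ pq.1.val.2 * pq.2.val.2 = h}),
      D.wedge (pact D (gf x)⁻¹ r.val.1).val.1 (pact D (gf x)⁻¹ r.val.2).val.1 = x.val := by
    intro x r
    simp only [pact_fst]
    rw [wedge_smul, r.2.2.2.1, inv_smul_eq_iff]
    exact (hgf1 x).symm
  have hcond : ∀ x : {μ : Λ // (∃ g : G, g • t = μ) ∧ μ ≤ lam ∧ h ∈ D.eta μ} ×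
      {pq : PartialElt D × PartialElt D //
        Quotient.mk (orbSetoid D) pq.1 = ω' ∧ Quotient.mk (orbSetoid D) pq.2 = ω'' ∧
        D.wedge pq.1.val.1 pq.2.val.1 = t ∧ pq.1.val.2 * pq.2.val.2 = h},
      Quotient.mk (orbSetoid D) (pact D (gf x.1)⁻¹ x.2.val.1) = ω' ∧
      Quotient.mk (orbSetoid D) (pact D (gf x.1)⁻¹ x.2.val.2) = ω'' ∧
      (pact D (gf x.1)⁻¹ x.2.val.1).val.2 * (pact D (gf x.1)⁻¹ x.2.val.2).val.2 = h ∧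
      D.wedge (pact D (gf x.1)⁻¹ x.2.val.1).val.1 (pact D (gf x.1)⁻¹ x.2.val.2).val.1 ≤ lam ∧
      (∃ g : G, g • D.wedge (pact D (gf x.1)⁻¹ x.2.val.1).val.1
        (pact D (gf x.1)⁻¹ x.2.val.2).val.1 = t) := by
    rintro ⟨x, r⟩
    obtain ⟨c1, c2, c3, c4⟩ := r.2
    refine ⟨?_, ?_, ?_, ?_, ?_⟩
    · rw [mk_pact]; exact c1
    · rw [mk_pact]; exact c2
    · simp only [pact_snd]
      have e : (gf x)⁻¹ * r.val.1.val.2 * (gf x)⁻¹⁻¹ * ((gf x)⁻¹ * r.val.2.val.2 * (gf x)⁻¹⁻¹)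
          = (gf x)⁻¹ * (r.val.1.val.2 * r.val.2.val.2) * (gf x)⁻¹⁻¹ := by group
      rw [e, c4]
      exact conj_cancel _ _ _ (hgf2 x)
    · rw [hw x r]; exact x.2.2.1
    · rw [hw x r]; exact ⟨gf x, hgf1 x⟩
  rw [xiConst, Pconst, ← Nat.card_prod]
  refine (Nat.card_eq_of_bijective
    (f := fun x => ⟨(pact D (gf x.1)⁻¹ x.2.val.1, pact D (gf x.1)⁻¹ x.2.val.2), hcond x⟩)
    ⟨?_, ?_⟩).symm
  · rintro ⟨x1, r1⟩ ⟨x2, r2⟩ huv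
    simp only [Subtype.mk.injEq, Prod.mk.injEq] at huv
    have hx : x1 = x2 := by
      apply Subtype.ext
      rw [← hw x1 r1, ← hw x2 r2, huv.1, huv.2]
    subst hx
    have hr1 : r1.val.1 = r2.val.1 := by
      have := congrArg (pact D (gf x1)) huv.1
      rwa [pact_pact_inv, pact_pact_inv] at this
    have hr2 : r1.val.2 = r2.val.2 := by
      have := congrArg (pact D (gf x1)) huv.2
      rwa [pact_pact_inv, pact_pact_inv] at this
    exact Prod.ext rfl (Subtype.ext (Prod.ext hr1 hr2))
  · rintro ⟨⟨p, q⟩, c1, c2, c3, c4, c5⟩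
    have hmw : h ∈ D.eta (D.wedge p.val.1 q.val.1) := by
      have := h_mem_wedge D (p, q)
      rwa [c3] at this
    obtain ⟨g0, hg0⟩ := c5
    refine ⟨⟨⟨D.wedge p.val.1 q.val.1, ⟨g0⁻¹, by rw [← hg0, inv_smul_smul]⟩, c4, hmw⟩,
      ⟨(pact D (gf ⟨D.wedge p.val.1 q.val.1, ⟨g0⁻¹, by rw [← hg0, inv_smul_smul]⟩, c4, hmw⟩) p,
        pact D (gf ⟨D.wedge p.val.1 q.val.1, ⟨g0⁻¹, by rw [← hg0, inv_smul_smul]⟩, c4, hmw⟩) q),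
       ?_, ?_, ?_, ?_⟩⟩, ?_⟩
    · rw [mk_pact]; exact c1
    · rw [mk_pact]; exact c2
    · simp only [pact_fst]
      rw [wedge_smul]
      exact hgf1 _
    · simp only [pact_snd]
      have e : ∀ g : G, g * p.val.2 * g⁻¹ * (g * q.val.2 * g⁻¹) = g * (p.val.2 * q.val.2) * g⁻¹ :=
        by intro g; group
      rw [e, c3]
      exact hgf2 _
    · apply Subtype.ext
      simp only [pact_inv_pact]

lemma rhs_card (lam : Λ) (h : G) (T : Finset Λ)
    (hTsub : ∀ t ∈ T, t ≤ lam ∧ h ∈ D.eta t)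
    (hT : ∀ μ : Λ, μ ≤ lam → h ∈ D.eta μ → ∃! t, t ∈ T ∧ ∃ g : G, g • μ = t)
    (ω' ω'' : Orb D) :
    Nat.card {pq : PartialElt D × PartialElt D //
      Quotient.mk (orbSetoid D) pq.1 = ω' ∧ Quotient.mk (orbSetoid D) pq.2 = ω'' ∧
      pq.1.val.2 * pq.2.val.2 = h ∧ D.wedge pq.1.val.1 pq.2.val.1 ≤ lam} =
    ∑ t ∈ T, xiConst D t h lam * Pconst D ω' ω'' t h := by
  classical
  haveI hfib : ∀ tt : {t : Λ // t ∈ T}, Finite {pq : PartialElt D × PartialElt D //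
      Quotient.mk (orbSetoid D) pq.1 = ω' ∧ Quotient.mk (orbSetoid D) pq.2 = ω'' ∧
      pq.1.val.2 * pq.2.val.2 = h ∧ D.wedge pq.1.val.1 pq.2.val.1 ≤ lam ∧
      (∃ g : G, g • D.wedge pq.1.val.1 pq.2.val.1 = tt.val)} := by
    intro tt
    apply finite_pairs D lam
    intro pq hpq
    exact ⟨le_trans (le_wedge_left D _ _) hpq.2.2.2.1,
           le_trans (le_wedge_right D _ _) hpq.2.2.2.1⟩
  have e1 : Nat.card {pq : PartialElt D × PartialElt D //
      Quotient.mk (orbSetoid D) pq.1 = ω' ∧ Quotient.mk (orbSetoid D) pq.2 = ω'' ∧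
      pq.1.val.2 * pq.2.val.2 = h ∧ D.wedge pq.1.val.1 pq.2.val.1 ≤ lam} =
    Nat.card (Σ tt : {t : Λ // t ∈ T}, {pq : PartialElt D × PartialElt D //
      Quotient.mk (orbSetoid D) pq.1 = ω' ∧ Quotient.mk (orbSetoid D) pq.2 = ω'' ∧
      pq.1.val.2 * pq.2.val.2 = h ∧ D.wedge pq.1.val.1 pq.2.val.1 ≤ lam ∧
      (∃ g : G, g • D.wedge pq.1.val.1 pq.2.val.1 = tt.val)}) := by
    refine (Nat.card_eq_of_bijective (f := fun x =>
      ⟨x.2.val, x.2.2.1, x.2.2.2.1, x.2.2.2.2.1, x.2.2.2.2.2.1⟩) ⟨?_, ?_⟩).symm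
    · rintro ⟨t1, r1⟩ ⟨t2, r2⟩ huv
      simp only [Subtype.mk.injEq] at huv
      have hmw : h ∈ D.eta (D.wedge r1.val.1.val.1 r1.val.2.val.1) := by
        have := h_mem_wedge D r1.val
        rwa [r1.2.2.2.1] at this
      have ht12 : t1 = t2 := by
        apply Subtype.ext
        refine (hT (D.wedge r1.val.1.val.1 r1.val.2.val.1) r1.2.2.2.2.1 hmw).unique
          ⟨t1.2, r1.2.2.2.2.2⟩ ?_
        refine ⟨t2.2, ?_⟩
        rw [huv]
        exact r2.2.2.2.2.2
      subst ht12
      have hr : r1 = r2 := Subtype.ext huv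
      rw [hr]
    · rintro ⟨pq, c1, c2, c3, c4⟩
      have hmw : h ∈ D.eta (D.wedge pq.1.val.1 pq.2.val.1) := by
        have := h_mem_wedge D pq
        rwa [c3] at this
      obtain ⟨t, ⟨htT, hg⟩, -⟩ := hT (D.wedge pq.1.val.1 pq.2.val.1) c4 hmw
      exact ⟨⟨⟨t, htT⟩, ⟨pq, c1, c2, c3, c4, hg⟩⟩, rfl⟩
  rw [e1, nat_card_sigma]
  have e3 : ∀ tt : {t : Λ // t ∈ T},
      Nat.card {pq : PartialElt D × PartialElt D //
      Quotient.mk (orbSetoid D) pq.1 = ω' ∧ Quotient.mk (orbSetoid D) pq.2 = ω'' ∧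
      pq.1.val.2 * pq.2.val.2 = h ∧ D.wedge pq.1.val.1 pq.2.val.1 ≤ lam ∧
      (∃ g : G, g • D.wedge pq.1.val.1 pq.2.val.1 = tt.val)} =
      xiConst D tt.val h lam * Pconst D ω' ω'' tt.val h :=
    fun tt => fiber_card D lam h tt.val (hTsub tt.val tt.2).1 (hTsub tt.val tt.2).2 ω' ω''
  rw [Finset.sum_congr rfl (fun tt _ => e3 tt)]
  exact Finset.sum_coe_sort T (fun t => xiConst D t h lam * Pconst D ω' ω'' t h)

end IKRhs
/-- Main Lemma: for `G`-orbits `l ∋ lam`, `l' ∋ lam'`, `l'' ∋ lam''`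
and conjugacy classes `c ∋ h`, `c' ∋ h'`, `c'' ∋ h''` (with `h ∈ G_λ` and the
representatives `h', h''` of `c', c''` chosen in `G_λ` as well):
`ξ(l',c';l)·ξ(l'',c'';l)·S^{c(l)}_{c'(l),c''(l)} = Σ_{l̃} ξ(l̃,c;l)·P^{(l̃,c)}_{(l',c'),(l'',c'')}`,
the sum running over a transversal `T` of the `G`-orbits `l̃ ⪯ l` whose members
contain `h` in their subgroup. -/
theorem stmt12 (D : AdmissibleData G Λ)
    (lam lam' lam'' : Λ) (h h' h'' : G)
    (hmem : h ∈ D.eta lam)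
    (hmem' : h' ∈ D.eta lam') (hmem'' : h'' ∈ D.eta lam'')
    (hmem'l : h' ∈ D.eta lam) (hmem''l : h'' ∈ D.eta lam)
    (T : Finset Λ)
    (hTsub : ∀ t ∈ T, t ≤ lam ∧ h ∈ D.eta t)
    (hT : ∀ μ : Λ, μ ≤ lam → h ∈ D.eta μ → ∃! t, t ∈ T ∧ ∃ g : G, g • μ = t) :
    xiConst D lam' h' lam * xiConst D lam'' h'' lam * Sconst D h' h'' lam h =
      ∑ t ∈ T, xiConst D t h lam *
        Pconst D (Quotient.mk (orbSetoid D) ⟨(lam', h'), hmem'⟩)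
          (Quotient.mk (orbSetoid D) ⟨(lam'', h''), hmem''⟩) t h := by
  rw [lhs_card D lam lam' lam'' h h' h'' hmem' hmem'' hmem'l hmem''l]
  exact rhs_card D lam h T hTsub hT _ _
end

section
/- The algebra A of conjugacy classes of partial elements, together with the projections π_λ : A → A_{⪯λ}, is the inverse (projective) limit of the system of finite-dimensional algebras {A_{⪯λ}, π_{λ',λ''}} indexed by the directed poset Λ: the π_λ are compatible (π_{λ',λ''} ∘ π_{λ''} = π_{λ'}) and the induced map A → lim← A_{⪯λ} restricted appropriately realizes A as the subalgebra of compatible families with all but the 'eventually stabilized' components determined. -/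
open scoped Classical

variable {G Λ : Type*} [Group G] [PartialOrder Λ] [OrderBot Λ] [MulAction G Λ]

/-- Partial elements of the truncated family `Λ_{⪯λ}`: pairs `(μ, h)` with
`μ ⪯ λ` and `h ∈ G_μ`. -/
abbrev PartialEltLe (D : AdmissibleData G Λ) (lam : Λ) : Type _ :=
  {p : Λ × G // p.1 ≤ lam ∧ p.2 ∈ D.eta p.1}

/-- Conjugacy of partial elements of `Λ_{⪯λ}` under the subgroup `G_λ`. -/
def orbSetoidLe (D : AdmissibleData G Λ) (lam : Λ) : Setoid (PartialEltLe D lam) where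
  r p q := ∃ g ∈ D.eta lam, g • p.val.1 = q.val.1 ∧ g * p.val.2 * g⁻¹ = q.val.2
  iseqv := by
    constructor
    · intro p; exact ⟨1, one_mem _, by simp, by simp⟩
    · rintro p q ⟨g, hg, h1, h2⟩
      exact ⟨g⁻¹, inv_mem hg, by rw [← h1, inv_smul_smul], by rw [← h2]; group⟩
    · rintro p q r ⟨g, hg, h1, h2⟩ ⟨g', hg', h1', h2'⟩
      exact ⟨g' * g, mul_mem hg' hg, by rw [mul_smul, h1, h1'],
        by rw [← h2', ← h2]; group⟩

/-- Conjugacy classes of partial elements of the truncated family: the basis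
index set of the finite-dimensional algebra `A_{⪯λ}`. -/
abbrev OrbLe (D : AdmissibleData G Λ) (lam : Λ) : Type _ := Quotient (orbSetoidLe D lam)

/-- Structure constants of the truncated algebra `A_{⪯λ}`. -/
noncomputable def PconstLe (D : AdmissibleData G Λ) (lam : Λ)
    (ω' ω'' : OrbLe D lam) (μ : Λ) (h : G) : ℕ :=
  Nat.card {pq : PartialEltLe D lam × PartialEltLe D lam //
    Quotient.mk (orbSetoidLe D lam) pq.1 = ω' ∧
    Quotient.mk (orbSetoidLe D lam) pq.2 = ω'' ∧
    D.wedge pq.1.val.1 pq.2.val.1 = μ ∧ pq.1.val.2 * pq.2.val.2 = h}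

/-- The multiplication of the truncated algebra `A_{⪯λ}` on coordinates with
respect to the basis of conjugacy-class sums, given by the structure constants. -/
noncomputable def mulLe (k : Type*) [Field k] (D : AdmissibleData G Λ) (lam : Λ)
    (a b : OrbLe D lam → k) : OrbLe D lam → k :=
  fun ω => ∑ᶠ ω' : OrbLe D lam, ∑ᶠ ω'' : OrbLe D lam,
    a ω' * b ω'' *
      (PconstLe D lam ω' ω'' (Quotient.out ω).val.1 (Quotient.out ω).val.2 : k)

/-- For `λ' ⪯ λ''`, every `G_{λ'}`-class of partial elements below `λ'` is
contained in a unique `G_{λ''}`-class of partial elements below `λ''`. -/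
def restrictOrb (D : AdmissibleData G Λ) {lam' lam'' : Λ} (hle : lam' ≤ lam'') :
    OrbLe D lam' → OrbLe D lam'' :=
  Quotient.lift
    (fun p => Quotient.mk (orbSetoidLe D lam'')
      ⟨p.val, le_trans p.prop.1 hle, p.prop.2⟩)
    (by rintro p q ⟨g, hg, h1, h2⟩
        exact Quotient.sound ⟨g, D.eta_mono hle hg, h1, h2⟩)

/-- The multiplication of the algebra `A` of conjugacy classes of partial
elements on coordinates with respect to the basis `{e_ω}`, given by the
structure constants. -/
noncomputable def mulGlob (k : Type*) [Field k] (D : AdmissibleData G Λ)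
    (a b : Orb D → k) : Orb D → k :=
  fun ω => ∑ᶠ ω' : Orb D, ∑ᶠ ω'' : Orb D,
    a ω' * b ω'' *
      (Pconst D ω' ω'' (Quotient.out ω).val.1 (Quotient.out ω).val.2 : k)

/-- Every `G_λ`-class of partial elements below `λ` is contained in a unique
`G`-class of partial elements. -/
def globOrb (D : AdmissibleData G Λ) (lam : Λ) : OrbLe D lam → Orb D :=
  Quotient.lift
    (fun p => Quotient.mk (orbSetoid D) ⟨p.val, p.prop.2⟩)
    (by rintro p q ⟨g, hg, h1, h2⟩
        exact Quotient.sound ⟨g, h1, h2⟩)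

section Aux

variable (D : AdmissibleData G Λ)

lemma aux_smul_wedge (g : G) (a b : Λ) : g • D.wedge a b = D.wedge (g • a) (g • b) := by
  have h1 := D.isLUB_wedge a b
  have h2 := D.isLUB_wedge (g • a) (g • b)
  refine IsLUB.unique ?_ h2
  constructor
  · rintro x hx
    rcases Set.mem_insert_iff.mp hx with rfl | hx
    · exact (D.smul_le_iff g a _).mp (h1.1 (Set.mem_insert _ _))
    · rcases Set.mem_singleton_iff.mp hx with rfl
      exact (D.smul_le_iff g b _).mp (h1.1 (Set.mem_insert_of_mem _ rfl))
  · intro x hx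
    have ha : a ≤ g⁻¹ • x := by
      have := (D.smul_le_iff g⁻¹ (g • a) x).mp (hx (Set.mem_insert _ _))
      rwa [inv_smul_smul] at this
    have hb : b ≤ g⁻¹ • x := by
      have := (D.smul_le_iff g⁻¹ (g • b) x).mp (hx (Set.mem_insert_of_mem _ rfl))
      rwa [inv_smul_smul] at this
    have : D.wedge a b ≤ g⁻¹ • x := by
      apply h1.2
      rintro y hy
      rcases Set.mem_insert_iff.mp hy with rfl | hy
      · exact ha
      · rcases Set.mem_singleton_iff.mp hy with rfl; exact hb
    have := (D.smul_le_iff g _ _).mp this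
    rwa [smul_inv_smul] at this

lemma aux_globOrb_injective (lam : Λ) : Function.Injective (globOrb D lam) := by
  intro x y
  induction x using Quotient.inductionOn with
  | h p =>
    induction y using Quotient.inductionOn with
    | h q =>
      intro h
      obtain ⟨g, h1, h2⟩ := Quotient.exact h
      obtain ⟨g', hg', h1', h2'⟩ := D.conj_cond lam p.val.1 q.val.1 p.val.2 q.val.2
        p.prop.1 q.prop.1 p.prop.2 q.prop.2 ⟨g, h1, h2⟩
      exact Quotient.sound ⟨g', hg', h1', h2'⟩

lemma aux_globOrb_restrict {lam' lam'' : Λ} (hle : lam' ≤ lam'') (σ : OrbLe D lam') :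
    globOrb D lam'' (restrictOrb D hle σ) = globOrb D lam' σ := by
  induction σ using Quotient.inductionOn with
  | h p => rfl

/-- Conjugation action on partial elements. -/
def auxSmulPE (g : G) (p : PartialElt D) : PartialElt D :=
  ⟨(g • p.val.1, g * p.val.2 * g⁻¹), (D.eta_equivariant g p.val.1 p.val.2).mp p.prop⟩

lemma aux_mk_smulPE (g : G) (p : PartialElt D) :
    Quotient.mk (orbSetoid D) (auxSmulPE D g p) = Quotient.mk (orbSetoid D) p :=
  (Quotient.sound (show (orbSetoid D).r p (auxSmulPE D g p) from ⟨g, rfl, rfl⟩)).symm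

lemma aux_smulPE_cancel (g : G) (p : PartialElt D) :
    auxSmulPE D g (auxSmulPE D g⁻¹ p) = p := by
  apply Subtype.ext
  apply Prod.ext
  · exact smul_inv_smul g p.val.1
  · show g * (g⁻¹ * p.val.2 * g⁻¹⁻¹) * g⁻¹ = p.val.2; group

lemma aux_smulPE_cancel' (g : G) (p : PartialElt D) :
    auxSmulPE D g⁻¹ (auxSmulPE D g p) = p := by
  apply Subtype.ext
  apply Prod.ext
  · exact inv_smul_smul g p.val.1
  · show g⁻¹ * (g * p.val.2 * g⁻¹) * g⁻¹⁻¹ = p.val.2; group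

/-- Conjugation as an equivalence of partial elements. -/
def auxSmulEquiv (g : G) : PartialElt D ≃ PartialElt D where
  toFun := auxSmulPE D g
  invFun := auxSmulPE D g⁻¹
  left_inv p := by
    apply Subtype.ext
    apply Prod.ext
    · exact inv_smul_smul g p.val.1
    · show g⁻¹ * (g * p.val.2 * g⁻¹) * g⁻¹⁻¹ = p.val.2; group
  right_inv p := by
    apply Subtype.ext
    apply Prod.ext
    · exact smul_inv_smul g p.val.1
    · show g * (g⁻¹ * p.val.2 * g⁻¹⁻¹) * g⁻¹ = p.val.2; group

lemma aux_pconst_smul (ω' ω'' : Orb D) (g : G) (l : Λ) (h : G) :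
    Pconst D ω' ω'' (g • l) (g * h * g⁻¹) = Pconst D ω' ω'' l h := by
  unfold Pconst
  refine Nat.card_congr ⟨fun x => ⟨(auxSmulPE D g⁻¹ x.val.1, auxSmulPE D g⁻¹ x.val.2),
      ?_, ?_, ?_, ?_⟩, fun x => ⟨(auxSmulPE D g x.val.1, auxSmulPE D g x.val.2),
      ?_, ?_, ?_, ?_⟩, fun x => ?_, fun x => ?_⟩
  · rw [aux_mk_smulPE]; exact x.prop.1
  · rw [aux_mk_smulPE]; exact x.prop.2.1
  · show D.wedge (g⁻¹ • _) (g⁻¹ • _) = l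
    rw [← aux_smul_wedge, x.prop.2.2.1, inv_smul_smul]
  · show (g⁻¹ * x.val.1.val.2 * g⁻¹⁻¹) * (g⁻¹ * x.val.2.val.2 * g⁻¹⁻¹) = h
    rw [show (g⁻¹ * x.val.1.val.2 * g⁻¹⁻¹) * (g⁻¹ * x.val.2.val.2 * g⁻¹⁻¹) =
      g⁻¹ * (x.val.1.val.2 * x.val.2.val.2) * g from by group, x.prop.2.2.2]
    group
  · rw [aux_mk_smulPE]; exact x.prop.1
  · rw [aux_mk_smulPE]; exact x.prop.2.1
  · show D.wedge (g • _) (g • _) = g • l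
    rw [← aux_smul_wedge, x.prop.2.2.1]
  · show (g * x.val.1.val.2 * g⁻¹) * (g * x.val.2.val.2 * g⁻¹) = g * h * g⁻¹
    rw [show (g * x.val.1.val.2 * g⁻¹) * (g * x.val.2.val.2 * g⁻¹) =
      g * (x.val.1.val.2 * x.val.2.val.2) * g⁻¹ from by group, x.prop.2.2.2]
  · exact Subtype.ext (Prod.ext (aux_smulPE_cancel D g x.val.1)
      (aux_smulPE_cancel D g x.val.2))
  · exact Subtype.ext (Prod.ext (aux_smulPE_cancel' D g x.val.1)
      (aux_smulPE_cancel' D g x.val.2))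

lemma aux_pconst_rep (ω' ω'' : Orb D) (ωg : Orb D) (p : PartialElt D)
    (hp : Quotient.mk (orbSetoid D) p = ωg) :
    Pconst D ω' ω'' (Quotient.out ωg).val.1 (Quotient.out ωg).val.2 =
      Pconst D ω' ω'' p.val.1 p.val.2 := by
  obtain ⟨g, h1, h2⟩ := Quotient.exact ((Quotient.out_eq ωg).trans hp.symm)
  rw [← h1, ← h2, aux_pconst_smul]

lemma aux_pconst_zero_left (lam : Λ) (ω' : Orb D)
    (hω' : ω' ∉ Set.range (globOrb D lam)) (ω'' : Orb D) {μ : Λ} (hμ : μ ≤ lam) (h : G) :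
    Pconst D ω' ω'' μ h = 0 := by
  rw [Pconst, Nat.card_eq_zero]
  left
  constructor
  rintro ⟨⟨p, q⟩, h1, _, h3, _⟩
  have hp : p.val.1 ≤ lam :=
    le_trans (h3 ▸ (D.isLUB_wedge p.val.1 q.val.1).1 (Set.mem_insert _ _)) hμ
  exact hω' ⟨Quotient.mk (orbSetoidLe D lam) ⟨p.val, hp, p.prop⟩, h1⟩

lemma aux_pconst_zero_right (lam : Λ) (ω' ω'' : Orb D)
    (hω'' : ω'' ∉ Set.range (globOrb D lam)) {μ : Λ} (hμ : μ ≤ lam) (h : G) :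
    Pconst D ω' ω'' μ h = 0 := by
  rw [Pconst, Nat.card_eq_zero]
  left
  constructor
  rintro ⟨⟨p, q⟩, _, h2, h3, _⟩
  have hq : q.val.1 ≤ lam :=
    le_trans (h3 ▸ (D.isLUB_wedge p.val.1 q.val.1).1 (Set.mem_insert_of_mem _ rfl)) hμ
  exact hω'' ⟨Quotient.mk (orbSetoidLe D lam) ⟨q.val, hq, q.prop⟩, h2⟩

lemma aux_pconst_glob (lam : Λ) (ω' ω'' : OrbLe D lam) {μ : Λ} (hμ : μ ≤ lam) (h : G) :
    Pconst D (globOrb D lam ω') (globOrb D lam ω'') μ h = PconstLe D lam ω' ω'' μ h := by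
  unfold Pconst PconstLe
  refine Nat.card_congr (Equiv.symm ?_)
  refine ⟨fun x => ⟨(⟨x.val.1.val, x.val.1.prop.2⟩, ⟨x.val.2.val, x.val.2.prop.2⟩),
      ?_, ?_, x.prop.2.2.1, x.prop.2.2.2⟩, fun x => ?_, fun x => ?_, fun x => ?_⟩
  · exact congrArg (globOrb D lam) x.prop.1
  · exact congrArg (globOrb D lam) x.prop.2.1
  · refine ⟨(⟨x.val.1.val,
      le_trans (le_of_le_of_eq ((D.isLUB_wedge x.val.1.val.1 x.val.2.val.1).1
        (Set.mem_insert _ _)) x.prop.2.2.1) hμ, x.val.1.prop⟩,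
      ⟨x.val.2.val,
      le_trans (le_of_le_of_eq ((D.isLUB_wedge x.val.1.val.1 x.val.2.val.1).1
        (Set.mem_insert_of_mem _ rfl)) x.prop.2.2.1) hμ, x.val.2.prop⟩),
      aux_globOrb_injective D lam x.prop.1, aux_globOrb_injective D lam x.prop.2.1,
      x.prop.2.2.1, x.prop.2.2.2⟩
  · apply Subtype.ext; rfl
  · apply Subtype.ext; rfl

lemma aux_finsum_comp_glob {k : Type*} [Field k] (lam : Λ) (F : Orb D → k)
    (h0 : ∀ ωg, ωg ∉ Set.range (globOrb D lam) → F ωg = 0) :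
    ∑ᶠ ωg, F ωg = ∑ᶠ σ : OrbLe D lam, F (globOrb D lam σ) := by
  rw [← finsum_mem_range (aux_globOrb_injective D lam), finsum_mem_def,
    Set.indicator_eq_self.2]
  intro x hx
  by_contra hx'
  exact hx (h0 x hx')

end Aux

/-- The algebra `A` of conjugacy classes of partial elements
(finitely supported coordinate vectors on `Ω`), with the projections
`π_λ : A → A_{⪯λ}`, `π_λ a = a ∘ globOrb D λ`, is the inverse limit of the
system `{A_{⪯λ}, π_{λ',λ''}}`: the projections are compatible
(`π_{λ',λ''} ∘ π_{λ''} = π_{λ'}`), each `π_λ` is an algebra homomorphism, the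
induced map into the product is injective on `A`, and every compatible family
supported on finitely many global classes comes from a unique element of `A`. -/
theorem stmt16 (k : Type*) [Field k] (D : AdmissibleData G Λ) :
    -- compatibility of the projections
    (∀ (lam' lam'' : Λ) (hle : lam' ≤ lam'') (a : Orb D → k),
      (a ∘ globOrb D lam'') ∘ restrictOrb D hle = a ∘ globOrb D lam') ∧
    -- each projection is multiplicative on A
    (∀ (lam : Λ) (a b : Orb D → k),
      (Function.support a).Finite → (Function.support b).Finite →
      mulGlob k D a b ∘ globOrb D lam =
        mulLe k D lam (a ∘ globOrb D lam) (b ∘ globOrb D lam)) ∧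
    -- the induced map A → lim← A_{⪯λ} is injective
    (∀ a b : Orb D → k,
      (Function.support a).Finite → (Function.support b).Finite →
      (∀ lam : Λ, a ∘ globOrb D lam = b ∘ globOrb D lam) → a = b) ∧
    -- every compatible family supported on finitely many classes comes from A
    (∀ f : (lam : Λ) → (OrbLe D lam → k),
      (∀ (lam' lam'' : Λ) (hle : lam' ≤ lam''),
        f lam'' ∘ restrictOrb D hle = f lam') →
      (∃ S : Set (Orb D), S.Finite ∧
        ∀ (lam : Λ) (ω : OrbLe D lam), f lam ω ≠ 0 → globOrb D lam ω ∈ S) →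
      ∃ a : Orb D → k, (Function.support a).Finite ∧
        ∀ lam : Λ, a ∘ globOrb D lam = f lam) := by
  refine ⟨?_, ?_, ?_, ?_⟩
  · -- compatibility
    intro lam' lam'' hle a
    funext σ
    simp only [Function.comp_apply, aux_globOrb_restrict]
  · -- multiplicativity
    intro lam a b _ _
    funext ω
    show mulGlob k D a b (globOrb D lam ω) = _
    unfold mulGlob mulLe
    have hμ : (Quotient.out ω).val.1 ≤ lam := (Quotient.out ω).prop.1
    have key : ∀ ω' ω'' : Orb D,
        Pconst D ω' ω'' (Quotient.out (globOrb D lam ω)).val.1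
          (Quotient.out (globOrb D lam ω)).val.2 =
        Pconst D ω' ω'' (Quotient.out ω).val.1 (Quotient.out ω).val.2 := by
      intro ω' ω''
      refine aux_pconst_rep D ω' ω'' _ ⟨(Quotient.out ω).val, (Quotient.out ω).prop.2⟩ ?_
      conv_rhs => rw [← Quotient.out_eq ω]
      rfl
    simp only [key]
    rw [aux_finsum_comp_glob D lam]
    · refine finsum_congr fun σ' => ?_
      rw [aux_finsum_comp_glob D lam]
      · refine finsum_congr fun σ'' => ?_
        rw [aux_pconst_glob D lam σ' σ'' hμ]
        rfl
      · intro ωg hωg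
        rw [aux_pconst_zero_right D lam _ _ hωg hμ]
        simp
    · intro ωg hωg
      refine finsum_eq_zero_of_forall_eq_zero fun ω'' => ?_
      rw [aux_pconst_zero_left D lam _ hωg _ hμ]
      simp
  · -- injectivity
    intro a b _ _ hab
    funext ω
    have h := congrFun (hab (Quotient.out ω).val.1)
      (Quotient.mk (orbSetoidLe D (Quotient.out ω).val.1)
        ⟨(Quotient.out ω).val, le_refl _, (Quotient.out ω).prop⟩)
    simp only [Function.comp_apply] at h
    have hg : globOrb D (Quotient.out ω).val.1
        (Quotient.mk (orbSetoidLe D (Quotient.out ω).val.1)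
          ⟨(Quotient.out ω).val, le_refl _, (Quotient.out ω).prop⟩) = ω := by
      conv_rhs => rw [← Quotient.out_eq ω]
      rfl
    rwa [hg] at h
  · -- surjectivity onto compatible, finitely supported families
    intro f hcompat ⟨S, hSfin, hS⟩
    set a : Orb D → k := fun ω =>
      f (Quotient.out ω).val.1 (Quotient.mk (orbSetoidLe D (Quotient.out ω).val.1)
        ⟨(Quotient.out ω).val, le_refl _, (Quotient.out ω).prop⟩) with ha
    have hglob : ∀ ω : Orb D, globOrb D (Quotient.out ω).val.1
        (Quotient.mk (orbSetoidLe D (Quotient.out ω).val.1)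
          ⟨(Quotient.out ω).val, le_refl _, (Quotient.out ω).prop⟩) = ω := by
      intro ω
      conv_rhs => rw [← Quotient.out_eq ω]
      rfl
    refine ⟨a, ?_, ?_⟩
    · refine hSfin.subset fun ω hω => ?_
      have := hS (Quotient.out ω).val.1 _ hω
      rwa [hglob ω] at this
    · intro lam
      funext σ
      show a (globOrb D lam σ) = f lam σ
      set ω := globOrb D lam σ with hω
      set l := (Quotient.out ω).val.1 with hl
      set σ₀ : OrbLe D l := Quotient.mk (orbSetoidLe D l)
        ⟨(Quotient.out ω).val, le_refl _, (Quotient.out ω).prop⟩ with hσ₀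
      set w := D.wedge lam l with hw
      have hle1 : lam ≤ w := (D.isLUB_wedge lam l).1 (Set.mem_insert _ _)
      have hle2 : l ≤ w := (D.isLUB_wedge lam l).1 (Set.mem_insert_of_mem _ rfl)
      have h1 : f lam σ = f w (restrictOrb D hle1 σ) :=
        (congrFun (hcompat lam w hle1) σ).symm
      have h2 : a ω = f w (restrictOrb D hle2 σ₀) :=
        (congrFun (hcompat l w hle2) σ₀).symm
      have hre : restrictOrb D hle1 σ = restrictOrb D hle2 σ₀ := by
        apply aux_globOrb_injective D w
        rw [aux_globOrb_restrict, aux_globOrb_restrict, hglob ω]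
      rw [h1, h2, hre]
end
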